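/- arXiv:2102.11839 — 9 statements merged into one kernel-verified Lean document; each statement's English description precedes it below -/
import Mathlib

section
/- For every positive integer n, the coefficient of x^n y^n in the polynomial ((x+1)(y+1)(x+y))^n ∈ ℤ[x,y] equals the n-th Franel number A_n = ∑_{k=0}^{n} C(n,k)^3. (Equivalently, the Franel numbers, i.e. Zagier's sporadic sequence A, form the constant term sequence of the Laurent polynomial (x+1)(y+1)(x+y)/(xy).) -/
open MvPolynomial Finset

lemma coeff_X0_X1_pow (n a b : ℕ) :
    ((X 0 ^ a * X 1 ^ b : MvPolynomial (Fin 2) ℤ)).coeff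
      (Finsupp.single 0 n + Finsupp.single 1 n) = if a = n ∧ b = n then 1 else 0 := by
  rw [X_pow_eq_monomial, X_pow_eq_monomial, monomial_mul, mul_one, coeff_monomial]
  congr 1
  simp only [eq_iff_iff]
  constructor
  · intro h
    have h0 := DFunLike.congr_fun h (0 : Fin 2)
    have h1 := DFunLike.congr_fun h (1 : Fin 2)
    simp [Finsupp.single_apply] at h0 h1
    exact ⟨h0, h1⟩
  · rintro ⟨rfl, rfl⟩; rfl

/-- Zagier's sporadic sequence A (the Franel numbers) is the constant term sequence of
the Laurent polynomial `(x+1)(y+1)(x+y)/(xy)`: the coefficient of `x^n y^n` in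
`((x+1)(y+1)(x+y))^n` equals the `n`-th Franel number `∑_{k=0}^n C(n,k)^3`. -/
theorem franel_constant_term (n : ℕ) (hn : 0 < n) :
    (((X 0 + 1) * (X 1 + 1) * (X 0 + X 1) : MvPolynomial (Fin 2) ℤ) ^ n).coeff
      (Finsupp.equivFunOnFinite.symm fun _ => n) =
    ∑ k ∈ range (n + 1), (n.choose k : ℤ) ^ 3 := by
  have hd : (Finsupp.equivFunOnFinite.symm fun _ => n : Fin 2 →₀ ℕ)
      = Finsupp.single 0 n + Finsupp.single 1 n := by
    ext i; fin_cases i <;> simp [Finsupp.single_apply]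
  rw [hd, mul_pow, mul_pow, add_pow, add_pow, add_pow]
  simp only [one_pow, mul_one]
  simp only [sum_mul, mul_sum, coeff_sum]
  have key : ∀ k ∈ range (n + 1), ∀ i ∈ range (n + 1), ∀ j ∈ range (n + 1),
      (((X 0 ^ k * (n.choose k : MvPolynomial (Fin 2) ℤ)) *
        (X 1 ^ i * (n.choose i : MvPolynomial (Fin 2) ℤ))) *
        (X 0 ^ j * X 1 ^ (n - j) * (n.choose j : MvPolynomial (Fin 2) ℤ))).coeff
        (Finsupp.single 0 n + Finsupp.single 1 n) =
      if k + j = n ∧ i + (n - j) = n then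
        (n.choose k : ℤ) * (n.choose i) * (n.choose j) else 0 := by
    intro k _ i _ j _
    have : ((X 0 ^ k * (n.choose k : MvPolynomial (Fin 2) ℤ)) *
        (X 1 ^ i * (n.choose i : MvPolynomial (Fin 2) ℤ))) *
        (X 0 ^ j * X 1 ^ (n - j) * (n.choose j : MvPolynomial (Fin 2) ℤ)) =
        C ((n.choose k : ℤ) * (n.choose i) * (n.choose j)) *
          (X 0 ^ (k + j) * X 1 ^ (i + (n - j))) := by
      simp only [map_mul, C_eq_coe_nat, pow_add]
      push_cast
      ring
    rw [this, coeff_C_mul, coeff_X0_X1_pow]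
    split <;> simp
  rw [sum_congr rfl fun j hj => sum_congr rfl fun i hi => sum_congr rfl fun k hk =>
    key k hk i hi j hj]
  refine sum_congr rfl fun j hj => ?_
  have hjn : j ≤ n := by simpa [Nat.lt_succ_iff] using mem_range.mp hj
  have h1 : ∀ i k : ℕ, ((k + j = n ∧ i + (n - j) = n)) ↔ (k = n - j ∧ i = j) := by
    intro i k; omega
  simp only [h1, ite_and, Finset.sum_ite_eq', mem_range, Nat.lt_succ_iff, Nat.sub_le, hjn,
    if_true, Nat.choose_symm hjn]
  ring
end

section
/- For every positive integer n, the coefficient of x^n y^n in the polynomial ((x+y+1)(x^2+y^2-xy-x-y+1))^n ∈ ℤ[x,y] equals (-1)^n B_n, where B_n = ∑_{k=0}^{⌊n/3⌋} (-1)^k 3^{n-3k} C(n,3k) C(3k,2k) C(2k,k) is Zagier's sporadic sequence B. (Equivalently, B is the constant term sequence of the Laurent polynomial (x+y+1)(x^2+y^2-xy-x-y+1)/(-xy).) -/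
open MvPolynomial Finset

/-- Zagier's sporadic sequence B. -/
def zagierB (n : ℕ) : ℤ :=
  ∑ k ∈ range (n / 3 + 1),
    (-1) ^ k * 3 ^ (n - 3 * k) * (n.choose (3 * k) : ℤ) *
      ((3 * k).choose (2 * k) : ℤ) * ((2 * k).choose k : ℤ)

lemma coeff_X0_pow_X1_pow (n a b : ℕ) :
    ((X 0 : MvPolynomial (Fin 2) ℤ) ^ a * X 1 ^ b).coeff
      (Finsupp.equivFunOnFinite.symm fun _ => n) = if a = n ∧ b = n then 1 else 0 := by
  rw [X_pow_eq_monomial, X_pow_eq_monomial, monomial_mul, coeff_monomial]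
  simp only [mul_one]
  congr 1
  simp [Finsupp.ext_iff, Fin.forall_fin_two, Finsupp.single_apply]

lemma expand_pow (n : ℕ) :
    (((X 0 : MvPolynomial (Fin 2) ℤ) ^ 3 + X 1 ^ 3) + (1 - 3 * (X 0 * X 1))) ^ n =
      ∑ k ∈ range (n + 1), ∑ j ∈ range (k + 1), ∑ i ∈ range (n - k + 1),
        C ((n.choose k : ℤ) * (k.choose j : ℤ) * ((n - k).choose i : ℤ) * (-3) ^ i) *
          (X 0 ^ (3 * j + i) * X 1 ^ (3 * (k - j) + i)) := by
  rw [add_pow]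
  refine Finset.sum_congr rfl fun k hk => ?_
  rw [add_pow]
  have h1 : (1 - 3 * ((X 0 : MvPolynomial (Fin 2) ℤ) * X 1)) = ((-3) * (X 0 * X 1) + 1) := by ring
  rw [h1, add_pow, Finset.sum_mul_sum, Finset.sum_mul]
  refine Finset.sum_congr rfl fun j hj => ?_
  rw [Finset.sum_mul]
  refine Finset.sum_congr rfl fun i hi => ?_
  have hC : (C ((n.choose k : ℤ) * (k.choose j : ℤ) * ((n - k).choose i : ℤ) * (-3) ^ i)
      : MvPolynomial (Fin 2) ℤ) =
      (n.choose k : MvPolynomial (Fin 2) ℤ) * (k.choose j : MvPolynomial (Fin 2) ℤ) *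
        ((n - k).choose i : MvPolynomial (Fin 2) ℤ) * (-3) ^ i := by
    simp [C_mul, C_pow]
  rw [hC]
  ring

/-- Zagier's sporadic sequence B is the constant term sequence of the Laurent polynomial
`(x+y+1)(x²+y²-xy-x-y+1)/(-xy)`: the coefficient of `x^n y^n` in
`((x+y+1)(x²+y²-xy-x-y+1))^n` equals `(-1)^n B_n`. -/
theorem zagierB_constant_term (n : ℕ) (hn : 0 < n) :
    (((X 0 + X 1 + 1) * (X 0 ^ 2 + X 1 ^ 2 - X 0 * X 1 - X 0 - X 1 + 1) :
        MvPolynomial (Fin 2) ℤ) ^ n).coeff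
      (Finsupp.equivFunOnFinite.symm fun _ => n) = (-1) ^ n * zagierB n := by
  have hfac : ((X 0 + X 1 + 1) * (X 0 ^ 2 + X 1 ^ 2 - X 0 * X 1 - X 0 - X 1 + 1) :
      MvPolynomial (Fin 2) ℤ) =
      ((X 0 : MvPolynomial (Fin 2) ℤ) ^ 3 + X 1 ^ 3) + (1 - 3 * (X 0 * X 1)) := by ring
  rw [hfac, expand_pow]
  simp only [coeff_sum, coeff_C_mul, coeff_X0_pow_X1_pow]
  -- collapse the i-sum
  have step1 : ∀ k ∈ range (n + 1), ∀ j ∈ range (k + 1),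
      (∑ i ∈ range (n - k + 1),
        (n.choose k : ℤ) * (k.choose j : ℤ) * ((n - k).choose i : ℤ) * (-3) ^ i *
          (if 3 * j + i = n ∧ 3 * (k - j) + i = n then 1 else 0)) =
      (n.choose k : ℤ) * (k.choose j : ℤ) * ((n - k).choose (n - 3 * j) : ℤ) *
        (-3) ^ (n - 3 * j) * (if k = 2 * j ∧ 3 * j ≤ n then 1 else 0) := by
    intro k hk j hj
    simp only [mem_range] at hk hj
    by_cases h : k = 2 * j ∧ 3 * j ≤ n
    · rw [if_pos h, mul_one]
      rw [Finset.sum_eq_single_of_mem (n - 3 * j) (by rw [mem_range]; omega)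
        (fun b hb hne => by
          rw [mem_range] at hb
          rw [if_neg (by rintro ⟨h1, h2⟩; omega), mul_zero])]
      rw [if_pos ⟨by omega, by omega⟩, mul_one]
    · rw [if_neg h, mul_zero]
      refine Finset.sum_eq_zero fun i hi => ?_
      rw [mem_range] at hi
      rw [if_neg (by rintro ⟨h1, h2⟩; exact h ⟨by omega, by omega⟩), mul_zero]
  rw [Finset.sum_congr rfl fun k hk => Finset.sum_congr rfl fun j hj => step1 k hk j hj]
  -- extend inner sum over j to range (n+1)
  have step2 : ∀ k ∈ range (n + 1),
      (∑ j ∈ range (k + 1),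
        (n.choose k : ℤ) * (k.choose j : ℤ) * ((n - k).choose (n - 3 * j) : ℤ) *
          (-3) ^ (n - 3 * j) * (if k = 2 * j ∧ 3 * j ≤ n then 1 else 0)) =
      ∑ j ∈ range (n + 1),
        (n.choose k : ℤ) * (k.choose j : ℤ) * ((n - k).choose (n - 3 * j) : ℤ) *
          (-3) ^ (n - 3 * j) * (if k = 2 * j ∧ 3 * j ≤ n then 1 else 0) := by
    intro k hk
    rw [mem_range] at hk
    refine Finset.sum_subset (by intro x hx; rw [mem_range] at *; omega) fun j hj hj' => ?_
    rw [mem_range] at hj hj'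
    rw [Nat.choose_eq_zero_of_lt (show k < j by omega)]
    push_cast
    ring
  rw [Finset.sum_congr rfl step2, Finset.sum_comm]
  -- collapse the k-sum
  have step3 : ∀ j ∈ range (n + 1),
      (∑ k ∈ range (n + 1),
        (n.choose k : ℤ) * (k.choose j : ℤ) * ((n - k).choose (n - 3 * j) : ℤ) *
          (-3) ^ (n - 3 * j) * (if k = 2 * j ∧ 3 * j ≤ n then 1 else 0)) =
      (n.choose (2 * j) : ℤ) * ((2 * j).choose j : ℤ) *
        ((n - 2 * j).choose (n - 3 * j) : ℤ) * (-3) ^ (n - 3 * j) *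
        (if 3 * j ≤ n then 1 else 0) := by
    intro j hj
    by_cases h3 : 3 * j ≤ n
    · rw [if_pos h3, mul_one]
      rw [Finset.sum_eq_single_of_mem (2 * j) (by rw [mem_range]; omega)
        (fun b hb hne => by rw [if_neg (by rintro ⟨h1, h2⟩; exact hne h1), mul_zero])]
      rw [if_pos ⟨rfl, h3⟩, mul_one]
    · rw [if_neg h3, mul_zero]
      refine Finset.sum_eq_zero fun k hk => ?_
      rw [if_neg (by rintro ⟨h1, h2⟩; exact h3 h2), mul_zero]
  rw [Finset.sum_congr rfl step3]
  -- restrict to range (n/3 + 1)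
  have step4 : (∑ j ∈ range (n + 1),
      (n.choose (2 * j) : ℤ) * ((2 * j).choose j : ℤ) *
        ((n - 2 * j).choose (n - 3 * j) : ℤ) * (-3) ^ (n - 3 * j) *
        (if 3 * j ≤ n then 1 else 0)) =
      ∑ j ∈ range (n / 3 + 1),
      (n.choose (2 * j) : ℤ) * ((2 * j).choose j : ℤ) *
        ((n - 2 * j).choose (n - 3 * j) : ℤ) * (-3) ^ (n - 3 * j) *
        (if 3 * j ≤ n then 1 else 0) := by
    refine (Finset.sum_subset (by intro x hx; rw [mem_range] at *; omega)
      fun j hj hj' => ?_).symm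
    rw [mem_range] at hj hj'
    rw [if_neg (by omega), mul_zero]
  rw [step4, zagierB, Finset.mul_sum]
  refine Finset.sum_congr rfl fun j hj => ?_
  rw [mem_range] at hj
  have h3 : 3 * j ≤ n := by omega
  rw [if_pos h3, mul_one]
  -- combinatorial identity
  have hch : n.choose (2 * j) * (n - 2 * j).choose (n - 3 * j) =
      n.choose (3 * j) * (3 * j).choose (2 * j) := by
    have h1 : (n - 2 * j).choose (n - 3 * j) = (n - 2 * j).choose j := by
      have : n - 3 * j = (n - 2 * j) - j := by omega
      rw [this, Nat.choose_symm (by omega)]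
    have h2 := Nat.choose_mul (n := n) (show 2 * j ≤ 3 * j by omega)
    have h4 : 3 * j - 2 * j = j := by omega
    rw [h1, h2, h4]
  -- sign manipulation
  have hsign : (-3 : ℤ) ^ (n - 3 * j) = (-1) ^ n * (-1) ^ j * 3 ^ (n - 3 * j) := by
    have h30 : (-3 : ℤ) = (-1) * 3 := by norm_num
    rw [h30, mul_pow]
    have h1 : ((-1 : ℤ)) ^ (3 * j) = (-1) ^ j := by
      rw [pow_mul]; norm_num
    have hjj : ((-1 : ℤ)) ^ j * (-1) ^ j = 1 := by rw [← mul_pow]; norm_num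
    have key : ((-1 : ℤ)) ^ (n - 3 * j) = (-1) ^ n * (-1) ^ j := by
      calc ((-1 : ℤ)) ^ (n - 3 * j) = (-1) ^ (n - 3 * j) * ((-1) ^ j * (-1) ^ j) := by
            rw [hjj, mul_one]
        _ = ((-1) ^ (n - 3 * j) * (-1) ^ (3 * j)) * (-1) ^ j := by rw [h1]; ring
        _ = (-1) ^ n * (-1) ^ j := by rw [← pow_add]; congr 2; omega
    rw [key]
  rw [hsign]
  have hchZ : ((n.choose (2 * j) : ℤ) * ((n - 2 * j).choose (n - 3 * j) : ℤ)) =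
      (n.choose (3 * j) : ℤ) * ((3 * j).choose (2 * j) : ℤ) := by exact_mod_cast hch
  linear_combination ((-1 : ℤ) ^ n * (-1) ^ j * 3 ^ (n - 3 * j) * ((2 * j).choose j : ℤ)) * hchZ
end

section
/- For every positive integer n, the coefficient of x^n y^n in the polynomial ((x+y+1)(xy+x+y))^n ∈ ℤ[x,y] equals C_n = ∑_{k=0}^{n} C(n,k)^2 C(2k,k), i.e. Zagier's sporadic sequence C is the constant term sequence of the Laurent polynomial (x+y+1)(xy+x+y)/(xy). -/
open MvPolynomial Finset


lemma zagier_deg_eq (a b n : ℕ) : (Finsupp.single (0 : Fin 2) a + Finsupp.single 1 b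
    = Finsupp.equivFunOnFinite.symm fun _ => n) ↔ (a = n ∧ b = n) := by
  constructor
  · intro h
    exact ⟨by simpa using DFunLike.congr_fun h 0, by simpa using DFunLike.congr_fun h 1⟩
  · rintro ⟨rfl, rfl⟩
    ext i
    fin_cases i <;> simp

lemma zagier_multinomial_choose (m : Fin 3 → ℕ) : Nat.multinomial univ m
    = (m 0 + (m 1 + m 2)).choose (m 0) * (m 1 + m 2).choose (m 1) := by
  have h : (univ : Finset (Fin 3)) = insert 0 {1, 2} := by decide
  rw [h, Nat.multinomial_insert (by decide), Finset.sum_pair (by decide),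
    Nat.binomial_eq_choose (by decide)]

lemma zagier_multinomial_rev (m : Fin 3 → ℕ) :
    Nat.multinomial univ ![m 2, m 1, m 0] = Nat.multinomial univ m := by
  simp only [Nat.multinomial, Fin.sum_univ_three, Fin.prod_univ_three, Matrix.cons_val_zero,
    Matrix.cons_val_one, Matrix.head_cons, Matrix.cons_val_two, Matrix.tail_cons]
  congr 1
  · congr 1; omega
  · ring

lemma zagier_mono_key (k m : Fin 3 → ℕ) :
    (∏ i : Fin 3, ![(X 0 : MvPolynomial (Fin 2) ℤ), X 1, 1] i ^ k i) *
      (∏ i : Fin 3, ![(X 0 * X 1 : MvPolynomial (Fin 2) ℤ), X 0, X 1] i ^ m i)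
    = monomial (Finsupp.single 0 (k 0 + m 0 + m 1) + Finsupp.single 1 (k 1 + m 0 + m 2)) 1 := by
  simp only [Fin.prod_univ_three, Matrix.cons_val_zero, Matrix.cons_val_one, Matrix.head_cons,
    Matrix.cons_val_two, Matrix.tail_cons, one_pow, mul_one, mul_pow, X_pow_eq_monomial,
    monomial_mul, mul_one, Finsupp.single_add]
  congr 1
  abel_nf

lemma zagier_vandermonde (k : ℕ) :
    ∑ q ∈ antidiagonal k, ((k.choose q.1 : ℤ) * (k.choose q.1)) = ((2 * k).choose k : ℤ) := by
  have h := Nat.add_choose_eq k k k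
  rw [show k + k = 2 * k by ring] at h
  rw [h]
  push_cast
  refine Finset.sum_congr rfl fun q hq => ?_
  rw [HasAntidiagonal.mem_antidiagonal] at hq
  rw [show k.choose q.2 = k.choose q.1 by
    rw [show q.2 = k - q.1 by omega, Nat.choose_symm (by omega)]]

lemma zagier_stepB (n : ℕ) :
    ∑ m ∈ piAntidiag (univ : Finset (Fin 3)) n, (Nat.multinomial univ m : ℤ) ^ 2
      = ∑ k ∈ range (n + 1), (n.choose k : ℤ) ^ 2 * ((2 * k).choose k : ℤ) := by
  have key : ∑ m ∈ piAntidiag (univ : Finset (Fin 3)) n, (Nat.multinomial univ m : ℤ) ^ 2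
      = ∑ x ∈ (range (n + 1)).sigma (fun k => antidiagonal k),
          ((n.choose x.1 : ℤ) * ((x.1).choose x.2.1 : ℤ)) ^ 2 := by
    refine Finset.sum_nbij' (fun m => ⟨m 1 + m 2, (m 1, m 2)⟩)
      (fun x => ![n - x.1, x.2.1, x.2.2]) ?_ ?_ ?_ ?_ ?_
    · intro m hm
      rw [mem_piAntidiag] at hm
      rw [Fin.sum_univ_three] at hm
      simp only [mem_sigma, mem_range, HasAntidiagonal.mem_antidiagonal]
      exact ⟨by omega, trivial⟩
    · intro x hx
      simp only [mem_sigma, mem_range, HasAntidiagonal.mem_antidiagonal] at hx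
      rw [mem_piAntidiag]
      refine ⟨?_, fun i _ => mem_univ i⟩
      rw [Fin.sum_univ_three]
      simp only [Matrix.cons_val_zero, Matrix.cons_val_one, Matrix.head_cons,
        Matrix.cons_val_two, Matrix.tail_cons]
      omega
    · intro m hm
      rw [mem_piAntidiag] at hm
      rw [Fin.sum_univ_three] at hm
      funext i
      fin_cases i <;> simp <;> omega
    · intro x hx
      simp only [mem_sigma, mem_range, HasAntidiagonal.mem_antidiagonal] at hx
      simp only [Matrix.cons_val_zero, Matrix.cons_val_one, Matrix.head_cons,
        Matrix.cons_val_two, Matrix.tail_cons]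
      obtain ⟨k, b, c⟩ := x
      simp only at hx ⊢
      congr 1
      omega
    · intro m hm
      rw [mem_piAntidiag] at hm
      rw [Fin.sum_univ_three] at hm
      rw [zagier_multinomial_choose m]
      have h0 : m 0 + (m 1 + m 2) = n := by omega
      rw [h0]
      have h1 : n.choose (m 0) = n.choose (m 1 + m 2) := by
        rw [show m 0 = n - (m 1 + m 2) by omega, Nat.choose_symm (by omega)]
      rw [h1]
      push_cast
      ring
  rw [key, Finset.sum_sigma]
  refine Finset.sum_congr rfl fun k _ => ?_
  have : ∑ q ∈ antidiagonal k, ((n.choose k : ℤ) * (k.choose q.1 : ℤ)) ^ 2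
      = (n.choose k : ℤ) ^ 2 * ∑ q ∈ antidiagonal k, ((k.choose q.1 : ℤ) * (k.choose q.1)) := by
    rw [Finset.mul_sum]
    refine Finset.sum_congr rfl fun q _ => ?_
    ring
  rw [this, zagier_vandermonde]

/-- Zagier's sporadic sequence C is the constant term sequence of the Laurent polynomial
`(x+y+1)(xy+x+y)/(xy)`: the coefficient of `x^n y^n` in `((x+y+1)(xy+x+y))^n` equals
`C_n = ∑_{k=0}^n C(n,k)² C(2k,k)`. -/
theorem zagierC_constant_term (n : ℕ) (hn : 0 < n) :
    (((X 0 + X 1 + 1) * (X 0 * X 1 + X 0 + X 1) : MvPolynomial (Fin 2) ℤ) ^ n).coeff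
      (Finsupp.equivFunOnFinite.symm fun _ => n) =
    ∑ k ∈ range (n + 1), (n.choose k : ℤ) ^ 2 * ((2 * k).choose k : ℤ) := by
  classical
  have hA : (X 0 + X 1 + 1 : MvPolynomial (Fin 2) ℤ)
      = ∑ i : Fin 3, ![(X 0 : MvPolynomial (Fin 2) ℤ), X 1, 1] i := by
    rw [Fin.sum_univ_three]; simp
  have hB : (X 0 * X 1 + X 0 + X 1 : MvPolynomial (Fin 2) ℤ)
      = ∑ i : Fin 3, ![(X 0 * X 1 : MvPolynomial (Fin 2) ℤ), X 0, X 1] i := by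
    rw [Fin.sum_univ_three]; simp
  rw [mul_pow, hA, hB, Finset.sum_pow_eq_sum_piAntidiag, Finset.sum_pow_eq_sum_piAntidiag,
    Finset.sum_mul_sum]
  -- rewrite each term as a monomial
  have hterm : ∀ k m : Fin 3 → ℕ,
      ((Nat.multinomial univ k : MvPolynomial (Fin 2) ℤ) *
          ∏ i : Fin 3, ![(X 0 : MvPolynomial (Fin 2) ℤ), X 1, 1] i ^ k i) *
        ((Nat.multinomial univ m : MvPolynomial (Fin 2) ℤ) *
          ∏ i : Fin 3, ![(X 0 * X 1 : MvPolynomial (Fin 2) ℤ), X 0, X 1] i ^ m i)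
      = monomial (Finsupp.single 0 (k 0 + m 0 + m 1) + Finsupp.single 1 (k 1 + m 0 + m 2))
          ((Nat.multinomial univ k * Nat.multinomial univ m : ℕ) : ℤ) := by
    intro k m
    rw [mul_mul_mul_comm, zagier_mono_key]
    rw [show ((Nat.multinomial univ k : MvPolynomial (Fin 2) ℤ) *
        (Nat.multinomial univ m : MvPolynomial (Fin 2) ℤ))
      = C ((Nat.multinomial univ k * Nat.multinomial univ m : ℕ) : ℤ) by
        simp [Nat.cast_mul, map_mul, map_natCast]]
    rw [C_mul_monomial, mul_one]
  simp only [hterm, coeff_sum, coeff_monomial]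
  rw [Finset.sum_comm]
  have hcollapse : ∀ m ∈ piAntidiag (univ : Finset (Fin 3)) n,
      (∑ k ∈ piAntidiag (univ : Finset (Fin 3)) n,
        if Finsupp.single (0 : Fin 2) (k 0 + m 0 + m 1) + Finsupp.single 1 (k 1 + m 0 + m 2)
            = Finsupp.equivFunOnFinite.symm fun _ => n then
          ((Nat.multinomial univ k * Nat.multinomial univ m : ℕ) : ℤ) else 0)
      = (Nat.multinomial univ m : ℤ) ^ 2 := by
    intro m hm
    rw [mem_piAntidiag] at hm
    rw [Fin.sum_univ_three] at hm
    rw [Finset.sum_eq_single (![m 2, m 1, m 0])]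
    · rw [if_pos]
      · rw [zagier_multinomial_rev]
        push_cast
        ring
      · rw [zagier_deg_eq]
        simp only [Matrix.cons_val_zero, Matrix.cons_val_one, Matrix.head_cons]
        omega
    · intro k hk hne
      rw [if_neg]
      rw [zagier_deg_eq]
      rw [mem_piAntidiag] at hk
      rw [Fin.sum_univ_three] at hk
      rintro ⟨h1, h2⟩
      apply hne
      funext i
      fin_cases i <;> simp <;> omega
    · intro h
      exfalso
      apply h
      rw [mem_piAntidiag]
      refine ⟨?_, fun i _ => mem_univ i⟩
      rw [Fin.sum_univ_three]
      simp only [Matrix.cons_val_zero, Matrix.cons_val_one, Matrix.head_cons,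
        Matrix.cons_val_two, Matrix.tail_cons]
      omega
  rw [Finset.sum_congr rfl hcollapse, zagier_stepB]
end

section
/- For every positive integer n, the coefficient of x^n y^n in the polynomial ((x+1)(y+1)(x+y+1))^n ∈ ℤ[x,y] equals the n-th Apéry number b_n = ∑_{k=0}^{n} C(n,k)^2 C(n+k,k) (Zagier's sporadic sequence D), i.e. the Apéry numbers b_n are the constant term sequence of the Laurent polynomial (x+1)(y+1)(x+y+1)/(xy). -/
open MvPolynomial Finset

/-- Auxiliary ring hom `MvPolynomial (Fin 1) ℤ →+* ℤ[X]`. -/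
noncomputable def psiAux : MvPolynomial (Fin 1) ℤ →+* Polynomial ℤ :=
  (Polynomial.mapRingHom (constantCoeff : MvPolynomial (Fin 0) ℤ →+* ℤ)).comp
    (finSuccEquiv ℤ 0).toRingEquiv.toRingHom

lemma psiAux_coeff (g : MvPolynomial (Fin 1) ℤ) (j : ℕ) :
    (psiAux g).coeff j = coeff (Finsupp.single 0 j) g := by
  have h0 : ((0 : Fin 0 →₀ ℕ).cons j) = Finsupp.single (0 : Fin 1) j := by
    ext a
    fin_cases a
    simp
  rw [psiAux]
  simp only [RingHom.comp_apply, Polynomial.coe_mapRingHom, Polynomial.coeff_map]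
  rw [show ((finSuccEquiv ℤ 0).toRingEquiv.toRingHom g) = finSuccEquiv ℤ 0 g from rfl]
  rw [show (constantCoeff ((finSuccEquiv ℤ 0 g).coeff j)) =
      coeff (0 : Fin 0 →₀ ℕ) ((finSuccEquiv ℤ 0 g).coeff j) from rfl]
  rw [finSuccEquiv_coeff_coeff, h0]

lemma psiAux_X : psiAux (X 0) = Polynomial.X := by
  rw [psiAux]
  simp [finSuccEquiv_X_zero]

/-- Auxiliary ring hom `MvPolynomial (Fin 2) ℤ →+* ℤ[X][X]`. -/
noncomputable def phiAux : MvPolynomial (Fin 2) ℤ →+* Polynomial (Polynomial ℤ) :=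
  (Polynomial.mapRingHom psiAux).comp (finSuccEquiv ℤ 1).toRingEquiv.toRingHom

lemma phiAux_coeff (f : MvPolynomial (Fin 2) ℤ) (i j : ℕ) :
    ((phiAux f).coeff i).coeff j = coeff (Finsupp.cons i (Finsupp.single 0 j)) f := by
  rw [phiAux]
  simp only [RingHom.comp_apply, Polynomial.coe_mapRingHom, Polynomial.coeff_map]
  rw [show ((finSuccEquiv ℤ 1).toRingEquiv.toRingHom f) = finSuccEquiv ℤ 1 f from rfl]
  rw [psiAux_coeff, finSuccEquiv_coeff_coeff]

lemma phiAux_X0 : phiAux (X 0) = Polynomial.X := by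
  rw [phiAux]
  simp [finSuccEquiv_X_zero]

lemma phiAux_X1 : phiAux (X 1) = Polynomial.C Polynomial.X := by
  rw [phiAux]
  simp only [RingHom.comp_apply]
  rw [show ((finSuccEquiv ℤ 1).toRingEquiv.toRingHom (X 1)) = finSuccEquiv ℤ 1 (X 1) from rfl]
  rw [show (X 1 : MvPolynomial (Fin 2) ℤ) = X (Fin.succ 0) from rfl, finSuccEquiv_X_succ]
  simp [psiAux_X]

/-- The Apéry numbers `b_n = ∑_{k=0}^n C(n,k)² C(n+k,k)` (Zagier's sporadic sequence D)
form the constant term sequence of the Laurent polynomial `(x+1)(y+1)(x+y+1)/(xy)`: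
the coefficient of `x^n y^n` in `((x+1)(y+1)(x+y+1))^n` equals `b_n`. -/
theorem apery2_constant_term (n : ℕ) (hn : 0 < n) :
    (((X 0 + 1) * (X 1 + 1) * (X 0 + X 1 + 1) : MvPolynomial (Fin 2) ℤ) ^ n).coeff
      (Finsupp.equivFunOnFinite.symm fun _ => n) =
    ∑ k ∈ range (n + 1), (n.choose k : ℤ) ^ 2 * ((n + k).choose k : ℤ) := by
  have hm : (Finsupp.equivFunOnFinite.symm fun _ => n : Fin 2 →₀ ℕ) =
      Finsupp.cons n (Finsupp.single 0 n) := by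
    ext a
    fin_cases a <;> simp [Finsupp.cons]
  rw [hm, ← phiAux_coeff]
  set Y : Polynomial ℤ := Polynomial.X
  set XX : Polynomial (Polynomial ℤ) := Polynomial.X
  have hP : phiAux (((X 0 + 1) * (X 1 + 1) * (X 0 + X 1 + 1) : MvPolynomial (Fin 2) ℤ) ^ n) =
      (((XX + 1) ^ 2 + Polynomial.C Y * (XX + 1)) ^ n) * Polynomial.C ((Y + 1) ^ n) := by
    rw [map_pow, map_mul, map_mul, map_add, map_add, map_add, map_add, map_one,
      phiAux_X0, phiAux_X1]
    rw [mul_pow, mul_pow]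
    have h1 : (Polynomial.C Y + 1 : Polynomial (Polynomial ℤ)) = Polynomial.C (Y + 1) := by
      simp
    rw [h1, ← map_pow]
    rw [mul_right_comm, ← mul_pow]
    have h2 : (XX + 1) * (XX + Polynomial.C Y + 1) =
        (XX + 1) ^ 2 + Polynomial.C Y * (XX + 1) := by ring
    rw [h2]
  rw [hP, add_pow, Finset.sum_mul, Polynomial.finset_sum_coeff, Polynomial.finset_sum_coeff]
  refine Finset.sum_congr rfl fun k hk => ?_
  rw [Finset.mem_range, Nat.lt_succ_iff] at hk
  obtain ⟨m, rfl⟩ : ∃ m, n = k + m := ⟨n - k, (Nat.add_sub_cancel' hk).symm⟩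
  simp only [Nat.add_sub_cancel_left]
  rw [mul_pow, ← map_pow, ← pow_mul,
    ← map_natCast (Polynomial.C : Polynomial ℤ →+* Polynomial (Polynomial ℤ))]
  have e1 : (XX + 1) ^ (2 * k) * (Polynomial.C (Y ^ m) * (XX + 1) ^ m) *
      Polynomial.C (((k + m).choose k : Polynomial ℤ)) * Polynomial.C ((Y + 1) ^ (k + m)) =
      (XX + 1) ^ (k + m + k) *
        Polynomial.C (Y ^ m * ((Y + 1) ^ (k + m) *
          Polynomial.C (((k + m).choose k : ℤ)))) := by
    rw [map_mul, map_mul, map_natCast (Polynomial.C : ℤ →+* Polynomial ℤ)]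
    ring
  rw [e1, Polynomial.coeff_mul_C, Polynomial.coeff_X_add_one_pow,
    ← map_natCast (Polynomial.C : ℤ →+* Polynomial ℤ), Polynomial.coeff_C_mul,
    ← mul_assoc (Y ^ m), Polynomial.coeff_mul_C, Polynomial.coeff_X_pow_mul,
    Polynomial.coeff_X_add_one_pow]
  rw [show (k + m + k).choose (k + m) = (k + m + k).choose k from Nat.choose_symm_add]
  ring
end

section
/- For every positive integer n, the coefficient of x^n y^n in the polynomial ((xy+x+y-1)(xy-x-y-1))^n ∈ ℤ[x,y] equals (-1)^n E_n, where E_n = ∑_{k=0}^{⌊n/2⌋} 4^{n-2k} C(n,2k) C(2k,k)^2 is Zagier's sporadic sequence E. (Equivalently, E is the constant term sequence of the Laurent polynomial (xy+x+y-1)(xy-x-y-1)/(-xy).) -/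
open MvPolynomial Finset

/-- Zagier's sporadic sequence E. -/
def zagierE (n : ℕ) : ℤ :=
  ∑ k ∈ range (n / 2 + 1),
    4 ^ (n - 2 * k) * (n.choose (2 * k) : ℤ) * ((2 * k).choose k : ℤ) ^ 2

private lemma zagier_target_eq (n : ℕ) :
    (Finsupp.equivFunOnFinite.symm fun _ => n : Fin 2 →₀ ℕ)
      = Finsupp.single 0 n + Finsupp.single 1 n := by
  ext i
  fin_cases i <;> simp [Finsupp.single_apply]

private lemma zagier_expand_factor (s : Fin 2) (j m : ℕ) :
    ((X s ^ 2 - 1 : MvPolynomial (Fin 2) ℤ) ^ j) * X s ^ m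
      = ∑ i ∈ range (j + 1),
          monomial (Finsupp.single s (2 * i + m)) ((-1 : ℤ) ^ (i + j) * (j.choose i : ℤ)) := by
  rw [sub_pow, sum_mul]
  refine Finset.sum_congr rfl fun i hi => ?_
  rw [← C_mul_X_pow_eq_monomial, map_mul, map_pow, map_neg, map_one,
    MvPolynomial.C_eq_coe_nat]
  rw [pow_add (X s) (2 * i) m, pow_mul (X s) 2 i]
  ring

private lemma zagier_coeff_term (n j : ℕ) (hj : j ≤ n) :
    ((((X 0 ^ 2 - 1) * (X 1 ^ 2 - 1) : MvPolynomial (Fin 2) ℤ)) ^ j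
        * (C 4 * (X 0 * X 1)) ^ (n - j)).coeff
      (Finsupp.single 0 n + Finsupp.single 1 n)
    = if j % 2 = 0 then (4 : ℤ) ^ (n - j) * ((j.choose (j / 2) : ℤ)) ^ 2 else 0 := by
  have hrw : (((X 0 ^ 2 - 1) * (X 1 ^ 2 - 1) : MvPolynomial (Fin 2) ℤ)) ^ j
        * (C 4 * (X 0 * X 1)) ^ (n - j)
      = C ((4 : ℤ) ^ (n - j)) *
          (((X 0 ^ 2 - 1) ^ j * X 0 ^ (n - j)) * ((X 1 ^ 2 - 1) ^ j * X 1 ^ (n - j))) := by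
    rw [map_pow, mul_pow]
    ring
  rw [hrw, coeff_C_mul, zagier_expand_factor, zagier_expand_factor, Finset.sum_mul_sum]
  simp only [monomial_mul, MvPolynomial.coeff_sum, coeff_monomial]
  have hcond : ∀ i i' : ℕ,
      (Finsupp.single (0 : Fin 2) (2 * i + (n - j)) + Finsupp.single (1 : Fin 2) (2 * i' + (n - j))
        = Finsupp.single (0 : Fin 2) n + Finsupp.single (1 : Fin 2) n)
      ↔ (2 * i = j ∧ 2 * i' = j) := by
    intro i i'
    constructor
    · intro h
      have h0 := DFunLike.congr_fun h 0
      have h1 := DFunLike.congr_fun h 1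
      simp [Finsupp.single_apply] at h0 h1
      omega
    · rintro ⟨h1, h2⟩
      have e1 : 2 * i + (n - j) = n := by omega
      have e2 : 2 * i' + (n - j) = n := by omega
      rw [e1, e2]
  by_cases hmod : j % 2 = 0
  · -- j even
    obtain ⟨k, hk⟩ : ∃ k, j = 2 * k := ⟨j / 2, by omega⟩
    subst hk
    rw [if_pos hmod]
    have key : ∀ i ∈ range (2 * k + 1), ∀ i' ∈ range (2 * k + 1),
        (if Finsupp.single (0 : Fin 2) (2 * i + (n - 2 * k))
              + Finsupp.single (1 : Fin 2) (2 * i' + (n - 2 * k))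
            = Finsupp.single (0 : Fin 2) n + Finsupp.single (1 : Fin 2) n then
          ((-1 : ℤ) ^ (i + 2 * k) * ((2 * k).choose i : ℤ))
            * ((-1 : ℤ) ^ (i' + 2 * k) * ((2 * k).choose i' : ℤ)) else 0)
        = (if i' = k then (if i = k then
            ((-1 : ℤ) ^ (i + 2 * k) * ((2 * k).choose i : ℤ))
            * ((-1 : ℤ) ^ (i' + 2 * k) * ((2 * k).choose i' : ℤ)) else 0) else 0) := by
      intro i _ i' _
      rw [← ite_and]
      refine if_congr ?_ rfl rfl
      rw [hcond i i']
      omega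
    rw [Finset.sum_congr rfl fun i hi => Finset.sum_congr rfl fun i' hi' => key i hi i' hi']
    have hkmem : k < 2 * k + 1 := by omega
    simp only [Finset.sum_ite_eq', mem_range, if_pos hkmem]
    have hdiv : 2 * k / 2 = k := by omega
    rw [hdiv]
    have hsq : ((-1 : ℤ) ^ (k + 2 * k)) * ((-1 : ℤ) ^ (k + 2 * k)) = 1 := by
      rw [← pow_add]
      exact Even.neg_one_pow ⟨k + 2 * k, by ring⟩
    have hval : ((-1 : ℤ) ^ (k + 2 * k) * ((2 * k).choose k : ℤ))
        * ((-1 : ℤ) ^ (k + 2 * k) * ((2 * k).choose k : ℤ))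
        = (((2 * k).choose k : ℤ)) ^ 2 := by
      have h2 : ((-1 : ℤ) ^ (k + 2 * k) * ((2 * k).choose k : ℤ))
          * ((-1 : ℤ) ^ (k + 2 * k) * ((2 * k).choose k : ℤ))
          = (((-1 : ℤ) ^ (k + 2 * k)) * ((-1 : ℤ) ^ (k + 2 * k)))
              * (((2 * k).choose k : ℤ)) ^ 2 := by ring
      rw [h2, hsq, one_mul]
    rw [hval]
  · -- j odd
    rw [if_neg hmod, mul_eq_zero]
    right
    refine Finset.sum_eq_zero fun i hi => Finset.sum_eq_zero fun i' hi' => ?_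
    rw [if_neg]
    rw [hcond i i']
    omega

private lemma zagier_reindex (f : ℕ → ℤ) (n : ℕ) :
    (∑ j ∈ range (n + 1), if j % 2 = 0 then f j else 0)
      = ∑ k ∈ range (n / 2 + 1), f (2 * k) := by
  rw [← Finset.sum_filter]
  refine Finset.sum_nbij' (fun j => j / 2) (fun k => 2 * k) ?_ ?_ ?_ ?_ ?_
  · intro a ha
    simp only [mem_filter, mem_range] at ha
    simp only [mem_range]
    omega
  · intro a ha
    simp only [mem_range] at ha
    simp only [mem_filter, mem_range]
    omega
  · intro a ha
    simp only [mem_filter, mem_range] at ha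
    show 2 * (a / 2) = a
    omega
  · intro a ha
    show 2 * a / 2 = a
    omega
  · intro a ha
    simp only [mem_filter, mem_range] at ha
    show f a = f (2 * (a / 2))
    congr 1
    omega

/-- Zagier's sporadic sequence E is the constant term sequence of the Laurent polynomial
`(xy+x+y-1)(xy-x-y-1)/(-xy)`: the coefficient of `x^n y^n` in
`((xy+x+y-1)(xy-x-y-1))^n` equals `(-1)^n E_n`. -/
theorem zagierE_constant_term (n : ℕ) (hn : 0 < n) :
    (((X 0 * X 1 + X 0 + X 1 - 1) * (X 0 * X 1 - X 0 - X 1 - 1) :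
        MvPolynomial (Fin 2) ℤ) ^ n).coeff
      (Finsupp.equivFunOnFinite.symm fun _ => n) = (-1) ^ n * zagierE n := by
  have hP : ((X 0 * X 1 + X 0 + X 1 - 1) * (X 0 * X 1 - X 0 - X 1 - 1) :
        MvPolynomial (Fin 2) ℤ)
      = ((X 0 ^ 2 - 1) * (X 1 ^ 2 - 1)) - (C 4 * (X 0 * X 1)) := by
    have h4 : (C 4 : MvPolynomial (Fin 2) ℤ) = 4 := by
      norm_num
    rw [h4]
    ring
  rw [zagier_target_eq, hP, sub_pow, MvPolynomial.coeff_sum]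
  have step : ∀ j ∈ range (n + 1),
      ((-1 : MvPolynomial (Fin 2) ℤ) ^ (j + n) * ((X 0 ^ 2 - 1) * (X 1 ^ 2 - 1)) ^ j
          * (C 4 * (X 0 * X 1)) ^ (n - j) * (n.choose j : MvPolynomial (Fin 2) ℤ)).coeff
        (Finsupp.single 0 n + Finsupp.single 1 n)
      = (-1) ^ n * (if j % 2 = 0 then
          (4 : ℤ) ^ (n - j) * ((n.choose j : ℤ)) * ((j.choose (j / 2) : ℤ)) ^ 2 else 0) := by
    intro j hj
    have hj' : j ≤ n := by
      simpa using Nat.lt_succ_iff.mp (mem_range.mp hj)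
    have hR : ((-1 : MvPolynomial (Fin 2) ℤ) ^ (j + n) * ((X 0 ^ 2 - 1) * (X 1 ^ 2 - 1)) ^ j
          * (C 4 * (X 0 * X 1)) ^ (n - j) * (n.choose j : MvPolynomial (Fin 2) ℤ))
        = C ((-1 : ℤ) ^ (j + n) * (n.choose j : ℤ)) *
            (((X 0 ^ 2 - 1) * (X 1 ^ 2 - 1)) ^ j * (C 4 * (X 0 * X 1)) ^ (n - j)) := by
      rw [map_mul, map_pow, map_neg, map_one, MvPolynomial.C_eq_coe_nat]
      ring
    rw [hR, coeff_C_mul, zagier_coeff_term n j hj']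
    by_cases h : j % 2 = 0
    · rw [if_pos h, if_pos h]
      have hsign : ((-1 : ℤ) ^ (j + n)) = (-1) ^ n := by
        obtain ⟨k, hk⟩ : ∃ k, j = 2 * k := ⟨j / 2, by omega⟩
        subst hk
        rw [pow_add, pow_mul]
        norm_num
      rw [hsign]
      ring
    · rw [if_neg h, if_neg h]
      ring
  rw [Finset.sum_congr rfl step, ← Finset.mul_sum]
  congr 1
  rw [zagier_reindex
    (fun j => (4 : ℤ) ^ (n - j) * ((n.choose j : ℤ)) * ((j.choose (j / 2) : ℤ)) ^ 2) n]
  unfold zagierE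
  refine Finset.sum_congr rfl fun k hk => ?_
  have hdiv : 2 * k / 2 = k := by omega
  rw [hdiv]
end

section
/- For every positive integer n, the coefficient of x^{2n} y^{2n} in the polynomial ((-x+y+1)(x-y+1)(x+y-1)(x+y+1)(x^2+y^2+1))^n ∈ ℤ[x,y] equals F_n = ∑_{k=0}^{n} (-1)^k 8^{n-k} C(n,k) ∑_{j=0}^{k} C(k,j)^3, i.e. Zagier's sporadic sequence F is the constant term sequence of the Laurent polynomial (-x+y+1)(x-y+1)(x+y-1)(x+y+1)(x^2+y^2+1)/(x^2 y^2). -/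
namespace ZagierAux

section NatLemmas
open Finset Nat

lemma N1 (k i : ℕ) (h : i ≤ k) :
    k.choose (2*i) * ((2*i).choose i * (2*(k-i)).choose (k-i)) =
      k.choose i * (k.choose i * (2*(k-i)).choose k) := by
  rcases le_or_gt (2*i) k with h2 | h2
  · obtain ⟨b, rfl⟩ : ∃ b, k = 2*i + b := ⟨k - 2*i, by omega⟩
    have e1 : 2*i + b - i = i + b := by omega
    rw [e1]
    have q1 : ((2*i+b).choose (2*i) : ℚ) = (2*i+b)! / ((2*i)! * b !) := by
      rw [Nat.cast_choose ℚ (by omega), show 2*i+b-2*i = b from by omega]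
    have q2 : ((2*i).choose i : ℚ) = (2*i)! / (i ! * i !) := by
      rw [Nat.cast_choose ℚ (by omega), show 2*i-i = i from by omega]
    have q3 : ((2*(i+b)).choose (i+b) : ℚ) = (2*(i+b))! / ((i+b)! * (i+b)!) := by
      rw [Nat.cast_choose ℚ (by omega), show 2*(i+b)-(i+b) = i+b from by omega]
    have q4 : ((2*i+b).choose i : ℚ) = (2*i+b)! / (i ! * (i+b)!) := by
      rw [Nat.cast_choose ℚ (by omega), show 2*i+b-i = i+b from by omega]
    have q5 : ((2*(i+b)).choose (2*i+b) : ℚ) = (2*(i+b))! / ((2*i+b)! * b !) := by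
      rw [Nat.cast_choose ℚ (by omega), show 2*(i+b)-(2*i+b) = b from by omega]
    have goal : (((2*i+b).choose (2*i) * ((2*i).choose i * (2*(i+b)).choose (i+b)) : ℕ) : ℚ)
        = (((2*i+b).choose i * ((2*i+b).choose i * (2*(i+b)).choose (2*i+b)) : ℕ) : ℚ) := by
      push_cast
      rw [q1, q2, q3, q4, q5]
      have f1 := (2*i+b).factorial_pos
      have f2 := (2*i).factorial_pos
      have f3 := i.factorial_pos
      have f4 := b.factorial_pos
      have f5 := (i+b).factorial_pos
      have f6 := (2*(i+b)).factorial_pos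
      have g1 : ((2*i+b)! : ℚ) ≠ 0 := by positivity
      have g2 : ((2*i)! : ℚ) ≠ 0 := by positivity
      have g3 : (i ! : ℚ) ≠ 0 := by positivity
      have g4 : (b ! : ℚ) ≠ 0 := by positivity
      have g5 : ((i+b)! : ℚ) ≠ 0 := by positivity
      have g6 : ((2*(i+b))! : ℚ) ≠ 0 := by positivity
      field_simp
    exact_mod_cast goal
  · rw [Nat.choose_eq_zero_of_lt h2, Nat.choose_eq_zero_of_lt (show 2*(k-i) < k from by omega)]
    ring

lemma N3 (n : ℕ) : (n+1) * (2*(n+1)).choose (n+1) = 2 * (2*n+1) * ((2*n).choose n) :=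
  Nat.succ_mul_centralBinom_succ n

lemma inner_vdm (j m : ℕ) (hmj : m ≤ j) :
    ∑ t ∈ range (m+1), m.choose t * j.choose (j - m + t) = (j+m).choose j := by
  rw [show j + m = m + j from by omega, Nat.add_choose_eq,
    Finset.Nat.sum_antidiagonal_eq_sum_range_succ_mk]
  simp only [succ_eq_add_one]
  have split := Finset.sum_range_add (fun x => m.choose x * j.choose (j - x)) (m+1) (j-m)
  rw [show j + 1 = (m+1) + (j - m) from by omega, split]
  have h2 : ∀ x ∈ range (j - m), m.choose (m + 1 + x) * j.choose (j - (m+1+x)) = 0 := by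
    intro x _
    rw [Nat.choose_eq_zero_of_lt (by omega), zero_mul]
  rw [Finset.sum_congr rfl h2, Finset.sum_const, smul_zero, add_zero]
  rw [← Finset.sum_range_reflect]
  apply Finset.sum_congr rfl
  intro t ht
  simp only [mem_range] at ht
  rw [show m + 1 - 1 - t = m - t from by omega, show j - m + (m - t) = j - t from by omega,
    Nat.choose_symm (show t ≤ m from by omega)]

lemma Shelper (j m : ℕ) (hmj : m ≤ j) :
    ∑ i ∈ range (j+m+1), ((j+m).choose i)^2 * ((i.choose j) * (i.choose m)) =
      ((j+m).choose j)^2 * (j+m).choose m := by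
  have hsub : Ico j (j+m+1) ⊆ range (j+m+1) := by
    intro x hx; simp only [mem_Ico, mem_range] at *; omega
  have step1 : ∑ i ∈ range (j+m+1), ((j+m).choose i)^2 * ((i.choose j) * (i.choose m)) =
      ∑ i ∈ Ico j (j+m+1), ((j+m).choose i)^2 * ((i.choose j) * (i.choose m)) := by
    refine (Finset.sum_subset hsub ?_).symm
    intro x _ hx
    simp only [mem_Ico, mem_range] at *
    rw [Nat.choose_eq_zero_of_lt (show x < j from by omega), zero_mul, mul_zero]
  rw [step1, Finset.sum_Ico_eq_sum_range, show j + m + 1 - j = m + 1 from by omega]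
  have term : ∀ t ∈ range (m+1),
      ((j+m).choose (j+t))^2 * (((j+t).choose j) * ((j+t).choose m)) =
      ((j+m).choose j * (j+m).choose m) * (m.choose t * j.choose (j - m + t)) := by
    intro t ht
    simp only [mem_range] at ht
    have e1 : (j+m).choose (j+t) * (j+t).choose j = (j+m).choose j * m.choose t := by
      rw [Nat.choose_mul (show j ≤ j+t from by omega)]
      rw [show j + m - j = m from by omega, show j + t - j = t from by omega]
    have e2 : (j+m).choose (j+t) * (j+t).choose m = (j+m).choose m * j.choose (j - m + t) := by
      rw [Nat.choose_mul (show m ≤ j+t from by omega)]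
      rw [show j + m - m = j from by omega, show j + t - m = j - m + t from by omega]
    calc ((j+m).choose (j+t))^2 * (((j+t).choose j) * ((j+t).choose m))
        = ((j+m).choose (j+t) * (j+t).choose j) * ((j+m).choose (j+t) * (j+t).choose m) := by ring
      _ = ((j+m).choose j * m.choose t) * ((j+m).choose m * j.choose (j - m + t)) := by
          rw [e1, e2]
      _ = ((j+m).choose j * (j+m).choose m) * (m.choose t * j.choose (j - m + t)) := by ring
  rw [Finset.sum_congr rfl term, ← Finset.mul_sum, inner_vdm j m hmj]
  ring

lemma strehl (k : ℕ) :
    ∑ i ∈ range (k+1), (k.choose i)^2 * (2*i).choose k = ∑ j ∈ range (k+1), (k.choose j)^3 := by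
  have expand : ∀ i : ℕ, (2*i).choose k = ∑ j ∈ range (k+1), i.choose j * i.choose (k - j) := by
    intro i
    rw [show 2*i = i + i from by omega, Nat.add_choose_eq,
      Finset.Nat.sum_antidiagonal_eq_sum_range_succ_mk]
  calc ∑ i ∈ range (k+1), (k.choose i)^2 * (2*i).choose k
      = ∑ i ∈ range (k+1), ∑ j ∈ range (k+1), (k.choose i)^2 * (i.choose j * i.choose (k-j)) := by
        apply Finset.sum_congr rfl; intro i _; rw [expand i, Finset.mul_sum]
    _ = ∑ j ∈ range (k+1), ∑ i ∈ range (k+1), (k.choose i)^2 * (i.choose j * i.choose (k-j)) :=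
        Finset.sum_comm
    _ = ∑ j ∈ range (k+1), (k.choose j)^3 := by
        apply Finset.sum_congr rfl
        intro j hj
        simp only [mem_range] at hj
        have hjk : j ≤ k := by omega
        rcases le_total (k - j) j with hc | hc
        · have h := Shelper j (k-j) hc
          rw [show j + (k-j) = k from by omega] at h
          rw [h, ← Nat.choose_symm hjk]
          ring
        · have h := Shelper (k-j) j hc
          rw [show (k-j) + j = k from by omega] at h
          have flip : ∑ i ∈ range (k+1), (k.choose i)^2 * (i.choose j * i.choose (k-j)) =
              ∑ i ∈ range (k+1), (k.choose i)^2 * (i.choose (k-j) * i.choose j) := by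
            apply Finset.sum_congr rfl; intros; ring
          rw [flip, h, Nat.choose_symm hjk]
          ring

end NatLemmas

section PolyLemmas
open Polynomial Finset

noncomputable def f (m n : ℕ) : Polynomial ℤ := (1 + X)^(2*m) * (1 - X)^(2*n)

lemma deriv_one_add (p : ℕ) :
    (1 + X) * derivative ((1 + X : Polynomial ℤ)^p) = (p : Polynomial ℤ) * (1 + X)^p := by
  cases p with
  | zero => simp
  | succ q =>
    rw [derivative_pow]
    simp only [derivative_add, derivative_one, derivative_X, zero_add, mul_one]
    push_cast
    ring_nf
    simp only [map_add, map_one, C_eq_natCast]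
    ring

lemma deriv_one_sub (p : ℕ) :
    (1 - X) * derivative ((1 - X : Polynomial ℤ)^p) = -(p : Polynomial ℤ) * (1 - X)^p := by
  cases p with
  | zero => simp
  | succ q =>
    rw [derivative_pow]
    simp only [derivative_sub, derivative_one, derivative_X, zero_sub]
    push_cast
    ring_nf
    simp only [map_add, map_one, C_eq_natCast]
    ring

-- ODE
lemma ode (m n : ℕ) :
    (1 + X) * (1 - X) * derivative (f m n)
      = (C (2*(m:ℤ)) * (1 - X) - C (2*(n:ℤ)) * (1 + X)) * f m n := by
  unfold f
  rw [derivative_mul]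
  have h1 := deriv_one_add (2*m)
  have h2 := deriv_one_sub (2*n)
  have e1 : ((2*m : ℕ) : Polynomial ℤ) = C (2*(m:ℤ)) := by push_cast; simp
  have e2 : ((2*n : ℕ) : Polynomial ℤ) = C (2*(n:ℤ)) := by push_cast; simp
  rw [e1] at h1; rw [e2] at h2
  linear_combination ((1-X)^(2*n) * (1-X)) * h1 + ((1+X)^(2*m) * (1+X)) * h2


lemma key_eq (m n : ℕ) :
    derivative (f m n) + C (2*(n:ℤ)) * (f m n)
        + (C (2*(m:ℤ)) + C (2*(n:ℤ))) * (X * (f m n))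
      = X^2 * derivative (f m n) + C (2*(m:ℤ)) * (f m n) := by
  linear_combination ode m n

lemma coeff_rel (m n j : ℕ) :
    (f m n).coeff (j+3) * ((j:ℤ)+3) + 2*(n:ℤ) * (f m n).coeff (j+2)
      + (2*(m:ℤ) + 2*(n:ℤ)) * (f m n).coeff (j+1)
    = (f m n).coeff (j+1) * ((j:ℤ)+1) + 2*(m:ℤ) * (f m n).coeff (j+2) := by
  have h := congrArg (fun p => Polynomial.coeff p (j+2)) (key_eq m n)
  simp only [coeff_add, coeff_C_mul, add_mul, coeff_X_mul] at h
  rw [show j+1+1 = j+2 from rfl] at h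
  rw [Polynomial.coeff_X_pow_mul (derivative (f m n)) 2 j, coeff_derivative,
    coeff_derivative] at h
  push_cast at h ⊢
  linarith [h]

lemma coeff_rel1 (m n : ℕ) :
    (f m n).coeff 2 * 2 + 2*(n:ℤ) * (f m n).coeff 1
      + (2*(m:ℤ) + 2*(n:ℤ)) * (f m n).coeff 0
    = 2*(m:ℤ) * (f m n).coeff 1 := by
  have h := congrArg (fun p => Polynomial.coeff p 1) (key_eq m n)
  simp only [coeff_add, coeff_C_mul, add_mul] at h
  rw [show (1:ℕ) = 0+1 from rfl] at h
  rw [coeff_X_mul] at h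
  have hz : (X^2 * derivative (f m n)).coeff (0+1) = 0 := by
    rw [Polynomial.coeff_X_pow_mul']; norm_num
  rw [hz] at h
  rw [coeff_derivative] at h
  push_cast at h ⊢
  linarith [h]

lemma coeff_rel0 (m n : ℕ) :
    (f m n).coeff 1 + 2*(n:ℤ) * (f m n).coeff 0 = 2*(m:ℤ) * (f m n).coeff 0 := by
  have h := congrArg (fun p => Polynomial.coeff p 0) (key_eq m n)
  simp only [coeff_add, coeff_C_mul, add_mul] at h
  have hz1 : (X * (f m n)).coeff 0 = 0 := by
    rw [show (X : Polynomial ℤ) * (f m n) = (f m n) * X^1 from by ring,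
      Polynomial.coeff_mul_X_pow']
    norm_num
  have hz2 : (X^2 * derivative (f m n)).coeff 0 = 0 := by
    rw [Polynomial.coeff_X_pow_mul']; norm_num
  have hz3 : (derivative (f m n)).coeff 0 = (f m n).coeff 1 * ((0:ℤ)+1) :=
    coeff_derivative _ 0
  rw [hz1, hz2, hz3] at h
  push_cast at h
  linarith [h]

lemma recurrence (m n : ℕ) :
    ((m:ℤ)+n+1) * (f m (n+1)).coeff (m+n+1) = -2*(2*(n:ℤ)+1) * (f m n).coeff (m+n) := by
  have hstep : f m (n+1) = f m n + f m n * X^2 - (f m n * X^1 + f m n * X^1) := by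
    unfold f; ring
  rcases Nat.lt_or_ge (m+n) 2 with hs | hs
  · have h01 : m + n = 0 ∨ m + n = 1 := by omega
    rcases h01 with h | h
    · obtain ⟨rfl, rfl⟩ : m = 0 ∧ n = 0 := by omega
      have hco : (f 0 1).coeff 1 = (f 0 0).coeff 1 - 2 * (f 0 0).coeff 0 := by
        rw [hstep]
        simp only [coeff_sub, coeff_add, Polynomial.coeff_mul_X_pow']
        norm_num
        ring
      have h0 := coeff_rel0 0 0
      norm_num at h0 ⊢
      rw [hco]
      linarith [h0]
    · have hco : (f m (n+1)).coeff 2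
          = (f m n).coeff 2 + (f m n).coeff 0 - 2 * (f m n).coeff 1 := by
        rw [hstep]
        simp only [coeff_sub, coeff_add, Polynomial.coeff_mul_X_pow']
        norm_num
        ring
      rw [show m+n+1 = 2 from by omega, show m+n = 1 from h, hco]
      have h1 := coeff_rel1 m n
      have hmn : (m:ℤ) + n = 1 := by exact_mod_cast congrArg (Nat.cast : ℕ → ℤ) h
      linear_combination h1 + ((f m n).coeff 2 - (f m n).coeff 0) * hmn
  · obtain ⟨t, ht⟩ : ∃ t, m + n = t + 2 := ⟨m + n - 2, by omega⟩
    have hrel := coeff_rel m n t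
    have hco : (f m (n+1)).coeff (t+3)
        = (f m n).coeff (t+3) + (f m n).coeff (t+1) - 2*(f m n).coeff (t+2) := by
      rw [hstep]
      simp only [coeff_sub, coeff_add, Polynomial.coeff_mul_X_pow']
      rw [if_pos (by omega : 2 ≤ t+3), if_pos (by omega : 1 ≤ t+3)]
      rw [show t+3-2 = t+1 from by omega, show t+3-1 = t+2 from by omega]
      ring
    rw [show m+n+1 = t+3 from by omega, show m+n = t+2 from ht, hco]
    have hmn : (m:ℤ) + n = t + 2 := by exact_mod_cast congrArg (Nat.cast : ℕ → ℤ) ht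
    linear_combination hrel + ((f m n).coeff (t+3) - (f m n).coeff (t+1)) * hmn


lemma central (m n : ℕ) :
    (((m+n).choose m : ℤ)) * (f m n).coeff (m+n)
      = (-1)^n * ((2*m).choose m : ℤ) * ((2*n).choose n : ℤ) := by
  induction n with
  | zero =>
    simp only [Nat.add_zero, Nat.choose_self, Nat.cast_one, one_mul, Nat.mul_zero, pow_zero,
      Nat.choose_zero_right, mul_one]
    unfold f
    simp only [Nat.mul_zero, pow_zero, mul_one]
    rw [show (1 + X : Polynomial ℤ) = (X + 1) from by ring, Polynomial.coeff_X_add_one_pow]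
  | succ n ih =>
    have hrec := recurrence m n
    have hnat : ((n:ℤ)+1) * ((m+n+1).choose m : ℤ) = ((m+n).choose m : ℤ) * ((m:ℤ)+n+1) := by
      have := Nat.choose_mul_succ_eq (m+n) m
      rw [show m+n+1-m = n+1 from by omega] at this
      have h2 : (m+n+1).choose m * (n+1) = (m+n).choose m * (m+n+1) := this.symm
      have h3 := congrArg (Nat.cast : ℕ → ℤ) h2
      push_cast at h3
      linarith [h3]
    have hN3 : ((n:ℤ)+1) * ((2*(n+1)).choose (n+1) : ℤ)
        = 2*(2*(n:ℤ)+1) * ((2*n).choose n : ℤ) := by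
      exact_mod_cast congrArg (Nat.cast : ℕ → ℤ) (Nat.succ_mul_centralBinom_succ n)
    have hne : ((n:ℤ)+1) ≠ 0 := by positivity
    apply mul_left_cancel₀ hne
    calc ((n:ℤ)+1) * (((m+n+1).choose m : ℤ) * (f m (n+1)).coeff (m+n+1))
        = (((m+n).choose m : ℤ)) * (((m:ℤ)+n+1) * (f m (n+1)).coeff (m+n+1)) := by
          rw [← mul_assoc, hnat]; ring
      _ = (((m+n).choose m : ℤ)) * (-2*(2*(n:ℤ)+1) * (f m n).coeff (m+n)) := by rw [hrec]
      _ = -2*(2*(n:ℤ)+1) * ((((m+n).choose m : ℤ)) * (f m n).coeff (m+n)) := by ring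
      _ = -2*(2*(n:ℤ)+1) * ((-1)^n * ((2*m).choose m : ℤ) * ((2*n).choose n : ℤ)) := by rw [ih]
      _ = (-1)^(n+1) * ((2*m).choose m : ℤ) * (2*(2*(n:ℤ)+1) * ((2*n).choose n : ℤ)) := by ring
      _ = ((n:ℤ)+1) * ((-1)^(n+1) * ((2*m).choose m : ℤ) * ((2*(n+1)).choose (n+1) : ℤ)) := by
          rw [← hN3]; ring
      _ = ((n:ℤ)+1) * ((-1)^(n+1) * ((2*m).choose m : ℤ) * ((2*(n+1)).choose (n+1) : ℤ)) := rfl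


-- L1
lemma L1 (k i : ℕ) (h : i ≤ k) :
    (-1:ℤ)^(k-i) * (k.choose (2*i) : ℤ) * (f i (k-i)).coeff k
      = (k.choose i : ℤ) * ((2*(k-i)).choose k : ℤ) := by
  have hc := central i (k-i)
  rw [show i + (k-i) = k from by omega] at hc
  have hpos : ((k.choose i : ℤ)) ≠ 0 := by
    have := Nat.choose_pos h
    positivity
  apply mul_left_cancel₀ hpos
  have hN1 := N1 k i h
  calc (k.choose i : ℤ) * ((-1:ℤ)^(k-i) * (k.choose (2*i) : ℤ) * (f i (k-i)).coeff k)
      = (-1:ℤ)^(k-i) * (k.choose (2*i) : ℤ) * ((k.choose i : ℤ) * (f i (k-i)).coeff k) := by ring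
    _ = (-1:ℤ)^(k-i) * (k.choose (2*i) : ℤ)
        * ((-1)^(k-i) * ((2*i).choose i : ℤ) * ((2*(k-i)).choose (k-i) : ℤ)) := by rw [hc]
    _ = ((-1:ℤ)^(k-i))^2 * ((k.choose (2*i) : ℤ)
        * (((2*i).choose i : ℤ) * ((2*(k-i)).choose (k-i) : ℤ))) := by ring
    _ = ((k.choose (2*i) * ((2*i).choose i * (2*(k-i)).choose (k-i)) : ℕ) : ℤ) := by
        rw [← pow_mul, show (k-i)*2 = 2*(k-i) from by ring, pow_mul, neg_one_sq, one_pow, one_mul]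
        push_cast; ring
    _ = ((k.choose i * (k.choose i * (2*(k-i)).choose k) : ℕ) : ℤ) := by rw [hN1]
    _ = (k.choose i : ℤ) * ((k.choose i : ℤ) * ((2*(k-i)).choose k : ℤ)) := by push_cast; ring


noncomputable def pp : Polynomial ℤ := (1 - X)^2
noncomputable def qq : Polynomial ℤ := 1 + X
noncomputable def aa (k i : ℕ) : Polynomial ℤ := Polynomial.C ((-1)^i * (k.choose i) : ℤ) * pp^(k-i)
noncomputable def bb (k j : ℕ) : Polynomial ℤ := Polynomial.C ((-1)^j * (k.choose j) : ℤ) * qq^(k-j)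

lemma hA (k : ℕ) : (C pp - X^2 : Polynomial (Polynomial ℤ))^k
    = ∑ i ∈ range (k+1), C (aa k i) * X^(2*i) := by
  rw [show (C pp - X^2 : Polynomial (Polynomial ℤ)) = (-X^2) + C pp from by ring, add_pow]
  apply Finset.sum_congr rfl
  intro i _
  unfold aa
  simp only [map_mul, map_pow, map_neg, map_one, map_intCast, map_natCast]
  push_cast
  ring

lemma hB (k : ℕ) : (C qq - X : Polynomial (Polynomial ℤ))^k
    = ∑ j ∈ range (k+1), C (bb k j) * X^j := by
  rw [show (C qq - X : Polynomial (Polynomial ℤ)) = (-X) + C qq from by ring, add_pow]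
  apply Finset.sum_congr rfl
  intro j _
  unfold bb
  simp only [map_mul, map_pow, map_neg, map_one, map_intCast, map_natCast]
  push_cast
  ring


noncomputable def Rp : Polynomial (Polynomial ℤ) :=
  (1 - C X - X) * (1 - C X + X) * (1 + C X - X)

lemma Rp_factored : Rp = (C pp - X^2) * (C qq - X) := by
  unfold Rp pp qq
  simp only [map_pow, map_sub, map_add, map_one]
  ring

lemma cf_eval (k : ℕ) :
    ((Rp^k).coeff k).coeff k = ∑ j ∈ range (k+1), ((k.choose j : ℤ))^3 := by
  rw [Rp_factored, mul_pow, hA, hB, Finset.sum_mul_sum]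
  -- outer coeff k
  have hterm : ∀ i ∈ range (k+1), ∀ j ∈ range (k+1),
      (C (aa k i) * X^(2*i) * (C (bb k j) * X^j)) = C (aa k i * bb k j) * X^(2*i+j) := by
    intro i _ j _
    rw [map_mul]
    ring
  rw [Finset.sum_congr rfl (fun i hi => Finset.sum_congr rfl (fun j hj => hterm i hi j hj))]
  rw [Polynomial.finset_sum_coeff]
  have houter : ∀ i ∈ range (k+1),
      (∑ j ∈ range (k+1), C (aa k i * bb k j) * X^(2*i+j)).coeff k
      = if 2*i ≤ k then aa k i * bb k (k - 2*i) else 0 := by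
    intro i _
    rw [Polynomial.finset_sum_coeff]
    rcases le_or_gt (2*i) k with h2 | h2
    · rw [if_pos h2]
      rw [Finset.sum_eq_single (k - 2*i)]
      · rw [coeff_C_mul, coeff_X_pow, if_pos (by omega : k = 2*i + (k - 2*i)), mul_one]
      · intro j _ hj
        rw [coeff_C_mul, coeff_X_pow, if_neg (by omega : ¬ k = 2*i + j), mul_zero]
      · intro hmem
        exact absurd (Finset.mem_range.mpr (by omega)) hmem
    · rw [if_neg (by omega)]
      apply Finset.sum_eq_zero
      intro j _
      rw [coeff_C_mul, coeff_X_pow, if_neg (by omega : ¬ k = 2*i + j), mul_zero]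
  rw [Finset.sum_congr rfl houter]
  -- inner coeff k
  rw [Polynomial.finset_sum_coeff]
  have hinner : ∀ i ∈ range (k+1),
      (if 2*i ≤ k then aa k i * bb k (k - 2*i) else 0).coeff k
      = ((k.choose i : ℤ))^2 * ((2*(k-i)).choose k : ℤ) := by
    intro i hi
    simp only [Finset.mem_range] at hi
    have hik : i ≤ k := by omega
    rcases le_or_gt (2*i) k with h2 | h2
    · rw [if_pos h2]
      have hsgn : (-1:ℤ)^i * (-1:ℤ)^(k-2*i) = (-1:ℤ)^(k-i) := by
        rw [← pow_add, show i + (k-2*i) = k - i from by omega]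
      have hscal : ((-1:ℤ)^i * (k.choose i : ℤ)) * ((-1:ℤ)^(k-2*i) * (k.choose (k-2*i) : ℤ))
          = (-1:ℤ)^(k-i) * ((k.choose i : ℤ) * (k.choose (k-2*i) : ℤ)) := by
        rw [← hsgn]; ring
      have hpoly : pp^(k-i) * qq^(2*i) = f i (k-i) := by
        unfold f pp qq
        rw [← pow_mul]
        ring
      have hab : aa k i * bb k (k - 2*i)
          = Polynomial.C ((-1)^(k-i) * ((k.choose i : ℤ) * (k.choose (k-2*i) : ℤ)))
            * f i (k-i) := by
        calc aa k i * bb k (k - 2*i)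
            = (Polynomial.C ((-1)^i * (k.choose i) : ℤ)
                * Polynomial.C ((-1)^(k-2*i) * (k.choose (k-2*i)) : ℤ))
              * (pp^(k-i) * qq^(k-(k-2*i))) := by unfold aa bb; ring
          _ = Polynomial.C (((-1)^i * (k.choose i) : ℤ)
                * ((-1)^(k-2*i) * (k.choose (k-2*i)) : ℤ))
              * (pp^(k-i) * qq^(2*i)) := by
                rw [← map_mul, show k-(k-2*i) = 2*i from by omega]
          _ = Polynomial.C ((-1)^(k-i) * ((k.choose i : ℤ) * (k.choose (k-2*i) : ℤ)))
              * f i (k-i) := by rw [hscal, hpoly]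
      rw [hab, coeff_C_mul]
      have hsymm : (k.choose (k-2*i) : ℤ) = (k.choose (2*i) : ℤ) := by
        exact_mod_cast congrArg (Nat.cast : ℕ → ℤ) (Nat.choose_symm h2)
      rw [hsymm]
      have hL := L1 k i hik
      calc (-1:ℤ)^(k-i) * ((k.choose i : ℤ) * (k.choose (2*i) : ℤ)) * (f i (k-i)).coeff k
          = (k.choose i : ℤ) * ((-1:ℤ)^(k-i) * (k.choose (2*i) : ℤ) * (f i (k-i)).coeff k) := by
            ring
        _ = (k.choose i : ℤ) * ((k.choose i : ℤ) * ((2*(k-i)).choose k : ℤ)) := by rw [hL]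
        _ = ((k.choose i : ℤ))^2 * ((2*(k-i)).choose k : ℤ) := by ring
    · rw [if_neg (by omega)]
      rw [show ((2*(k-i)).choose k) = 0 from Nat.choose_eq_zero_of_lt (by omega)]
      simp
  rw [Finset.sum_congr rfl hinner]
  -- reflect and strehl
  rw [← Finset.sum_range_reflect]
  have hrefl : ∀ i ∈ range (k+1),
      ((k.choose (k+1-1-i) : ℤ))^2 * ((2*(k-(k+1-1-i))).choose k : ℤ)
      = ((k.choose i : ℤ))^2 * ((2*i).choose k : ℤ) := by
    intro i hi
    simp only [Finset.mem_range] at hi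
    rw [show k+1-1-i = k-i from by omega, show k - (k-i) = i from by omega]
    rw [show (k.choose (k-i) : ℤ) = (k.choose i : ℤ) from by
      exact_mod_cast congrArg (Nat.cast : ℕ → ℤ) (Nat.choose_symm (by omega))]
  rw [Finset.sum_congr rfl hrefl]
  have := congrArg (Nat.cast : ℕ → ℤ) (strehl k)
  push_cast at this
  exact_mod_cast this


noncomputable def φ : MvPolynomial (Fin 2) ℤ →+* Polynomial (Polynomial ℤ) :=
  MvPolynomial.eval₂Hom ((Polynomial.C : (Polynomial ℤ) →+* Polynomial (Polynomial ℤ)).comp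
    (Polynomial.C : ℤ →+* Polynomial ℤ)) (fun i => if i = 0 then C X else X)

lemma transfer (p : MvPolynomial (Fin 2) ℤ) (d : Fin 2 →₀ ℕ) :
    p.coeff d = ((φ p).coeff (d 1)).coeff (d 0) := by
  induction p using MvPolynomial.induction_on' with
  | monomial u a =>
    rw [MvPolynomial.coeff_monomial]
    have hφ : φ (MvPolynomial.monomial u a) = C (C a * X ^ (u 0)) * X ^ (u 1) := by
      unfold φ
      rw [MvPolynomial.eval₂Hom_monomial]
      rw [Finsupp.prod_fintype _ _ (fun i => pow_zero _)]
      rw [Fin.prod_univ_two]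
      simp only [if_pos rfl, if_neg (by decide : ¬ (1 : Fin 2) = 0), RingHom.comp_apply]
      norm_num
      ring
    rw [hφ, coeff_C_mul, coeff_X_pow]
    by_cases hb : d 1 = u 1
    · rw [if_pos hb, mul_one, coeff_C_mul, coeff_X_pow]
      by_cases ha : d 0 = u 0
      · rw [if_pos ha, mul_one, if_pos]
        ext i
        match i with
        | 0 => exact ha.symm
        | 1 => exact hb.symm
      · rw [if_neg ha, mul_zero, if_neg]
        intro h
        exact ha (by rw [h])
    · rw [if_neg hb, mul_zero, coeff_zero, if_neg]
      intro h
      exact hb (by rw [h])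
  | add p q hp hq =>
    rw [MvPolynomial.coeff_add, map_add, coeff_add, coeff_add, hp, hq]


noncomputable def Qp : Polynomial (Polynomial ℤ) := 8 * C X * X - Rp

noncomputable def E : Polynomial (Polynomial ℤ) →+* Polynomial (Polynomial ℤ) :=
  ((Polynomial.expand (Polynomial ℤ) 2).toRingHom).comp
    (Polynomial.mapRingHom (Polynomial.expand ℤ 2).toRingHom)

lemma E_coeff (q : Polynomial (Polynomial ℤ)) (n : ℕ) :
    ((E q).coeff (2*n)).coeff (2*n) = ((q.coeff n).coeff n) := by
  unfold E
  simp only [RingHom.comp_apply, AlgHom.toRingHom_eq_coe, RingHom.coe_coe,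
    Polynomial.coe_mapRingHom]
  rw [Polynomial.coeff_expand (by norm_num : 0 < 2), if_pos ⟨n, by ring⟩,
    show 2*n/2 = n from by omega, Polynomial.coeff_map]
  have h2 : ((Polynomial.expand ℤ 2) (q.coeff n)).coeff (2*n) = (q.coeff n).coeff n := by
    rw [Polynomial.coeff_expand (by norm_num : 0 < 2), if_pos ⟨n, by ring⟩,
      show 2*n/2 = n from by omega]
  exact h2

lemma phi_P : φ ((-MvPolynomial.X 0 + MvPolynomial.X 1 + 1) * (MvPolynomial.X 0 - MvPolynomial.X 1 + 1)
    * (MvPolynomial.X 0 + MvPolynomial.X 1 - 1) * (MvPolynomial.X 0 + MvPolynomial.X 1 + 1) *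
    (MvPolynomial.X 0 ^ 2 + MvPolynomial.X 1 ^ 2 + 1) : MvPolynomial (Fin 2) ℤ) = E Qp := by
  have hx0 : φ (MvPolynomial.X 0) = C X := by
    unfold φ
    rw [MvPolynomial.eval₂Hom_X']
    norm_num
  have hx1 : φ (MvPolynomial.X 1) = X := by
    unfold φ
    rw [MvPolynomial.eval₂Hom_X']
    norm_num
  have hE : E Qp = 8 * C (X^2) * X^2
      - ((1 - C (X^2) - X^2) * (1 - C (X^2) + X^2) * (1 + C (X^2) - X^2)) := by
    have e1 : E (C X) = C (X^2) := by
      unfold E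
      simp only [RingHom.comp_apply, AlgHom.toRingHom_eq_coe, RingHom.coe_coe,
        Polynomial.coe_mapRingHom, Polynomial.map_C]
      simp [Polynomial.expand_X]
    have e2 : E X = X^2 := by
      unfold E
      simp only [RingHom.comp_apply, AlgHom.toRingHom_eq_coe, RingHom.coe_coe,
        Polynomial.coe_mapRingHom, Polynomial.map_X]
      simp [Polynomial.expand_X]
    unfold Qp Rp
    simp only [map_sub, map_mul, map_add, map_one, map_ofNat, e1, e2]
  simp only [map_mul, map_add, map_sub, map_neg, map_one, map_pow, map_ofNat, hx0, hx1, hE]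
  ring




lemma Q_coeff (n : ℕ) :
    ((Qp^n).coeff n).coeff n
      = ∑ k ∈ range (n+1), (-1)^k * 8^(n-k) * (n.choose k : ℤ)
          * ∑ j ∈ range (k+1), (k.choose j : ℤ)^3 := by
  rw [show Qp = (-Rp) + 8 * C X * X from by unfold Qp; ring, add_pow]
  have hterm : ∀ k ∈ range (n+1),
      (-Rp)^k * (8 * C X * X)^(n-k) * ((n.choose k : ℕ) : Polynomial (Polynomial ℤ))
      = (C (Polynomial.C ((-1)^k * 8^(n-k) * (n.choose k : ℤ)) * X^(n-k)) * Rp^k) * X^(n-k) := by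
    intro k _
    simp only [map_mul, map_pow, map_neg, map_one, map_ofNat, map_natCast]
    ring
  rw [Finset.sum_congr rfl hterm, Polynomial.finset_sum_coeff]
  have houter : ∀ k ∈ range (n+1),
      ((C (Polynomial.C ((-1)^k * 8^(n-k) * (n.choose k : ℤ)) * X^(n-k)) * Rp^k) * X^(n-k)).coeff n
      = (Polynomial.C ((-1)^k * 8^(n-k) * (n.choose k : ℤ)) * X^(n-k)) * ((Rp^k).coeff k) := by
    intro k hk
    simp only [Finset.mem_range] at hk
    rw [Polynomial.coeff_mul_X_pow', if_pos (by omega : n - k ≤ n),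
      show n - (n-k) = k from by omega, coeff_C_mul]
  rw [Finset.sum_congr rfl houter, Polynomial.finset_sum_coeff]
  apply Finset.sum_congr rfl
  intro k hk
  simp only [Finset.mem_range] at hk
  rw [show (Polynomial.C ((-1)^k * 8^(n-k) * (n.choose k : ℤ)) * X^(n-k)) * ((Rp^k).coeff k)
      = (Polynomial.C ((-1)^k * 8^(n-k) * (n.choose k : ℤ)) * ((Rp^k).coeff k)) * X^(n-k) from by
    ring]
  rw [Polynomial.coeff_mul_X_pow', if_pos (by omega : n - k ≤ n),
    show n - (n-k) = k from by omega, Polynomial.coeff_C_mul, cf_eval k]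


end PolyLemmas

end ZagierAux

open MvPolynomial Finset

/-- Zagier's sporadic sequence F. -/
def zagierF (n : ℕ) : ℤ :=
  ∑ k ∈ range (n + 1),
    (-1) ^ k * 8 ^ (n - k) * (n.choose k : ℤ) *
      ∑ j ∈ range (k + 1), (k.choose j : ℤ) ^ 3

/-- Zagier's sporadic sequence F is the constant term sequence of the Laurent polynomial
`(-x+y+1)(x-y+1)(x+y-1)(x+y+1)(x²+y²+1)/(x²y²)`: the coefficient of `x^{2n} y^{2n}` in
`((-x+y+1)(x-y+1)(x+y-1)(x+y+1)(x²+y²+1))^n` equals `F_n`. -/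
theorem zagierF_constant_term (n : ℕ) (hn : 0 < n) :
    (((-X 0 + X 1 + 1) * (X 0 - X 1 + 1) * (X 0 + X 1 - 1) * (X 0 + X 1 + 1) *
        (X 0 ^ 2 + X 1 ^ 2 + 1) : MvPolynomial (Fin 2) ℤ) ^ n).coeff
      (Finsupp.equivFunOnFinite.symm fun _ => 2 * n) = zagierF n := by
  rw [ZagierAux.transfer]
  simp only [Finsupp.coe_equivFunOnFinite_symm]
  rw [map_pow, ZagierAux.phi_P, ← map_pow, ZagierAux.E_coeff, ZagierAux.Q_coeff]
  rfl
end

section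
/- For every positive integer n, the coefficient of x^n y^n z^n in the polynomial ((y+z)(x+1)(x+y+1)(x+y+z))^n ∈ ℤ[x,y,z] equals the n-th Apéry number a_n = ∑_{k=0}^{n} C(n,k)^2 C(n+k,k)^2, i.e. the Apéry numbers a_n (sporadic sequence (γ)) form the constant term sequence of the Laurent polynomial (y+z)(x+1)(x+y+1)(x+y+z)/(xyz). -/
open MvPolynomial Finset


lemma sum_ite_unique {M : Type*} [AddCommMonoid M] {N c : ℕ} {P : ℕ → Prop} [DecidablePred P]
    (f : ℕ → M) (h : ∀ a < N, P a → a = c) :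
    ∑ a ∈ range N, (if P a then f a else 0) = if c < N ∧ P c then f c else 0 := by
  by_cases hc : c < N ∧ P c
  · rw [if_pos hc, Finset.sum_eq_single_of_mem c (mem_range.2 hc.1)]
    · rw [if_pos hc.2]
    · intro b hb hbc
      rw [if_neg]
      exact fun hPb => hbc (h b (mem_range.1 hb) hPb)
  · rw [if_neg hc, Finset.sum_eq_zero]
    intro a ha
    rw [if_neg]
    intro hPa
    have := h a (mem_range.1 ha) hPa
    subst this
    exact hc ⟨mem_range.1 ha, hPa⟩

lemma keyZ (n : ℕ) :
    (∑ x ∈ range (n+1), ∑ x1 ∈ range (x+1), ∑ x2 ∈ range (n+1), ∑ x3 ∈ range (x2+1),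
      ∑ x4 ∈ range (n+1), ∑ x5 ∈ range (n+1),
        if 0 + x4 + x3 + x1 = n ∧ x5 + 0 + (x2 - x3) + (x - x1) = n ∧ n - x5 + 0 + 0 + (n - x) = n
        then (↑(n.choose x5) * ↑(n.choose x4) * (↑(n.choose x2) * ↑(x2.choose x3)) *
              (↑(n.choose x) * ↑(x.choose x1)) : ℤ)
        else 0)
    = ∑ x ∈ range (n+1), ∑ x1 ∈ range (x+1), ∑ x2 ∈ range (n+1),
        ((n.choose x : ℤ) * n.choose x * x.choose x1)
          * ((n.choose x2 : ℤ) * n.choose x2 * x2.choose x1) := by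
  refine Finset.sum_congr rfl fun x hx => ?_
  refine Finset.sum_congr rfl fun x1 hx1 => ?_
  refine Finset.sum_congr rfl fun x2 hx2 => ?_
  simp only [mem_range] at hx hx1 hx2
  -- eliminate x5 (innermost), then x4, then x3
  have h5 : ∀ x3 ∈ range (x2+1), ∀ x4 ∈ range (n+1), (∑ x5 ∈ range (n+1),
      if 0 + x4 + x3 + x1 = n ∧ x5 + 0 + (x2 - x3) + (x - x1) = n ∧ n - x5 + 0 + 0 + (n - x) = n
      then (↑(n.choose x5) * ↑(n.choose x4) * (↑(n.choose x2) * ↑(x2.choose x3)) *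
            (↑(n.choose x) * ↑(x.choose x1)) : ℤ)
      else 0)
      = if (n - x < n+1 ∧ (0 + x4 + x3 + x1 = n ∧ (n-x) + 0 + (x2 - x3) + (x - x1) = n ∧
            n - (n-x) + 0 + 0 + (n - x) = n))
        then (↑(n.choose (n-x)) * ↑(n.choose x4) * (↑(n.choose x2) * ↑(x2.choose x3)) *
              (↑(n.choose x) * ↑(x.choose x1)) : ℤ)
        else 0 := by
    intro x3 _ x4 _
    exact sum_ite_unique (c := n - x) _ (fun x5 h5' hP => by omega)
  have h4 : ∀ x3 ∈ range (x2+1), (∑ x4 ∈ range (n+1), ∑ x5 ∈ range (n+1),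
      if 0 + x4 + x3 + x1 = n ∧ x5 + 0 + (x2 - x3) + (x - x1) = n ∧ n - x5 + 0 + 0 + (n - x) = n
      then (↑(n.choose x5) * ↑(n.choose x4) * (↑(n.choose x2) * ↑(x2.choose x3)) *
            (↑(n.choose x) * ↑(x.choose x1)) : ℤ)
      else 0)
      = if (n-x3-x1 < n+1 ∧ (n - x < n+1 ∧ (0 + (n-x3-x1) + x3 + x1 = n ∧
            (n-x) + 0 + (x2 - x3) + (x - x1) = n ∧ n - (n-x) + 0 + 0 + (n - x) = n)))
        then (↑(n.choose (n-x)) * ↑(n.choose (n-x3-x1)) * (↑(n.choose x2) * ↑(x2.choose x3)) *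
              (↑(n.choose x) * ↑(x.choose x1)) : ℤ)
        else 0 := by
    intro x3 hx3
    rw [Finset.sum_congr rfl (h5 x3 hx3)]
    exact sum_ite_unique (c := n - x3 - x1) _ (fun x4 _ hP => by omega)
  rw [Finset.sum_congr rfl h4]
  rw [sum_ite_unique (c := x2 - x1) _ (fun x3 hx3 hP => by omega)]
  by_cases hc : x1 ≤ x2
  · rw [if_pos (by constructor <;> [omega; constructor <;> [omega; omega]])]
    have e1 : n - (x2 - x1) - x1 = n - x2 := by omega
    have e2 : x2 - (x2 - x1) = x1 := by omega
    rw [e1, Nat.choose_symm (by omega : x ≤ n), Nat.choose_symm (by omega : x2 ≤ n),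
      Nat.choose_symm (by omega : x1 ≤ x2)]
    ring
  · rw [if_neg (by omega), Nat.choose_eq_zero_of_lt (by omega : x2 < x1)]
    push_cast
    ring


lemma sumV (n a : ℕ) (ha : a ≤ n) :
    ∑ m ∈ range (n + 1), n.choose m * n.choose m * m.choose a
      = n.choose a * (n + (n - a)).choose (n - a) := by
  have h1 : ∑ m ∈ range (n + 1), n.choose m * n.choose m * m.choose a
      = ∑ m ∈ Ico a (n + 1), n.choose m * n.choose m * m.choose a := by
    rw [range_eq_Ico]
    refine (Finset.sum_subset (Ico_subset_Ico (Nat.zero_le a) le_rfl) ?_).symm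
    intro m hm hm'
    simp only [mem_Ico] at hm hm'
    have : m < a := by omega
    rw [Nat.choose_eq_zero_of_lt this, mul_zero]
  rw [h1, Finset.sum_Ico_eq_sum_range]
  have h2 : ∀ i ∈ range (n + 1 - a), n.choose (a + i) * n.choose (a + i) * (a + i).choose a
      = n.choose a * (n.choose (a + i) * (n - a).choose i) := by
    intro i hi
    have h := Nat.choose_mul (n := n) (k := a + i) (s := a) (by omega)
    simp only [Nat.add_sub_cancel_left] at h
    rw [mul_assoc, h]; ring
  rw [Finset.sum_congr rfl h2, ← Finset.mul_sum]
  congr 1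
  rw [Nat.add_choose_eq, Finset.Nat.sum_antidiagonal_eq_sum_range_succ_mk]
  have h3 : n + 1 - a = n - a + 1 := by omega
  rw [h3, ← Finset.sum_range_reflect]
  refine Finset.sum_congr rfl ?_
  intro i hi
  simp only [mem_range, Nat.add_sub_cancel] at hi ⊢
  have e1 : a + (n - a - i) = n - i := by omega
  rw [e1, Nat.choose_symm (by omega)]

lemma sumVZ (n a : ℕ) (ha : a ≤ n) :
    ∑ m ∈ range (n + 1), (n.choose m : ℤ) * n.choose m * m.choose a
      = (n.choose a : ℤ) * (n + (n - a)).choose (n - a) := by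
  rw [show ((n.choose a : ℤ) * (n + (n - a)).choose (n - a))
      = ((n.choose a * (n + (n - a)).choose (n - a) : ℕ) : ℤ) by push_cast; ring,
    ← sumV n a ha]
  push_cast
  ring

lemma keyZ2 (n : ℕ) :
    (∑ x ∈ range (n+1), ∑ x1 ∈ range (x+1), ∑ x2 ∈ range (n+1),
        ((n.choose x : ℤ) * n.choose x * x.choose x1)
          * ((n.choose x2 : ℤ) * n.choose x2 * x2.choose x1))
    = ∑ k ∈ range (n + 1), (n.choose k : ℤ) ^ 2 * ((n + k).choose k : ℤ) ^ 2 := by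
  have h1 : ∀ x ∈ range (n+1), (∑ x1 ∈ range (x+1), ∑ x2 ∈ range (n+1),
      ((n.choose x : ℤ) * n.choose x * x.choose x1)
        * ((n.choose x2 : ℤ) * n.choose x2 * x2.choose x1))
      = ∑ x1 ∈ range (n+1), ((n.choose x : ℤ) * n.choose x * x.choose x1)
          * ((n.choose x1 : ℤ) * (n + (n - x1)).choose (n - x1)) := by
    intro x hx
    simp only [mem_range] at hx
    have h2 : ∀ x1 ∈ range (x+1), (∑ x2 ∈ range (n+1),
          ((n.choose x : ℤ) * n.choose x * x.choose x1)
            * ((n.choose x2 : ℤ) * n.choose x2 * x2.choose x1))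
        = ((n.choose x : ℤ) * n.choose x * x.choose x1)
            * ((n.choose x1 : ℤ) * (n + (n - x1)).choose (n - x1)) := by
      intro x1 hx1
      simp only [mem_range] at hx1
      rw [← Finset.mul_sum, sumVZ n x1 (by omega)]
    rw [Finset.sum_congr rfl h2]
    refine Finset.sum_subset (Finset.range_subset_range.2 (by omega)) ?_
    intro x1 _ hx1'
    simp only [mem_range] at hx1'
    rw [Nat.choose_eq_zero_of_lt (by omega : x < x1)]
    push_cast
    ring
  rw [Finset.sum_congr rfl h1, Finset.sum_comm]
  have h3 : ∀ x1 ∈ range (n+1), (∑ x ∈ range (n+1),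
      ((n.choose x : ℤ) * n.choose x * x.choose x1)
        * ((n.choose x1 : ℤ) * (n + (n - x1)).choose (n - x1)))
      = ((n.choose x1 : ℤ) * (n + (n - x1)).choose (n - x1))
        * ((n.choose x1 : ℤ) * (n + (n - x1)).choose (n - x1)) := by
    intro x1 hx1
    simp only [mem_range] at hx1
    rw [← Finset.sum_mul, sumVZ n x1 (by omega)]
  rw [Finset.sum_congr rfl h3, ← Finset.sum_range_reflect]
  refine Finset.sum_congr rfl fun k hk => ?_
  simp only [mem_range] at hk
  have e1 : n + 1 - 1 - k = n - k := by omega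
  have e2 : n - (n - k) = k := by omega
  rw [e1, e2, Nat.choose_symm (by omega : k ≤ n)]
  ring


noncomputable def T (a b c : ℕ) : Fin 3 →₀ ℕ :=
  Finsupp.single 0 a + Finsupp.single 1 b + Finsupp.single 2 c

lemma T_mul (a b c a' b' c' : ℕ) (r s : ℤ) :
    (monomial (T a b c) r : MvPolynomial (Fin 3) ℤ) * monomial (T a' b' c') s
      = monomial (T (a+a') (b+b') (c+c')) (r*s) := by
  rw [monomial_mul]
  congr 1
  simp only [T, Finsupp.single_add]
  abel

lemma T_eq (n a b c : ℕ) :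
    T a b c = (Finsupp.equivFunOnFinite.symm fun _ => n : Fin 3 →₀ ℕ)
      ↔ (a = n ∧ b = n ∧ c = n) := by
  rw [DFunLike.ext_iff]
  constructor
  · intro h
    have h0 := h 0
    have h1 := h 1
    have h2 := h 2
    simp [T, Finsupp.single_apply] at h0 h1 h2
    exact ⟨h0, h1, h2⟩
  · rintro ⟨rfl, rfl, rfl⟩ i
    fin_cases i <;> simp [T, Finsupp.single_apply]

lemma E2 (n : ℕ) : ((X 0 + 1 : MvPolynomial (Fin 3) ℤ))^n
    = ∑ k ∈ range (n+1), monomial (T k 0 0) (n.choose k : ℤ) := by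
  rw [add_pow]
  refine Finset.sum_congr rfl fun k _ => ?_
  rw [one_pow, mul_one, X_pow_eq_monomial, ← C_eq_coe_nat, C_apply, monomial_mul]
  simp [T]

lemma E1 (n : ℕ) : ((X 1 + X 2 : MvPolynomial (Fin 3) ℤ))^n
    = ∑ j ∈ range (n+1), monomial (T 0 j (n-j)) (n.choose j : ℤ) := by
  rw [add_pow]
  refine Finset.sum_congr rfl fun j _ => ?_
  rw [X_pow_eq_monomial, X_pow_eq_monomial, monomial_mul, ← C_eq_coe_nat, C_apply, monomial_mul]
  simp [T]

lemma E0 (m : ℕ) : ((X 0 + X 1 : MvPolynomial (Fin 3) ℤ))^m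
    = ∑ d ∈ range (m+1), monomial (T d (m-d) 0) (m.choose d : ℤ) := by
  rw [add_pow]
  refine Finset.sum_congr rfl fun d _ => ?_
  rw [X_pow_eq_monomial, X_pow_eq_monomial, monomial_mul, ← C_eq_coe_nat, C_apply, monomial_mul]
  simp [T]

lemma E3 (n : ℕ) : ((X 0 + X 1 + 1 : MvPolynomial (Fin 3) ℤ))^n
    = ∑ m ∈ range (n+1), ∑ d ∈ range (m+1),
        monomial (T d (m-d) 0) ((n.choose m : ℤ) * (m.choose d : ℤ)) := by
  rw [add_pow]
  refine Finset.sum_congr rfl fun m _ => ?_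
  rw [one_pow, mul_one, E0, Finset.sum_mul]
  refine Finset.sum_congr rfl fun d _ => ?_
  rw [← C_eq_coe_nat, C_apply, monomial_mul]
  simp [mul_comm]

lemma E4 (n : ℕ) : ((X 0 + X 1 + X 2 : MvPolynomial (Fin 3) ℤ))^n
    = ∑ j2 ∈ range (n+1), ∑ a ∈ range (j2+1),
        monomial (T a (j2-a) (n-j2)) ((n.choose j2 : ℤ) * (j2.choose a : ℤ)) := by
  rw [add_pow]
  refine Finset.sum_congr rfl fun j2 _ => ?_
  rw [E0, X_pow_eq_monomial, ← C_eq_coe_nat, C_apply, Finset.sum_mul, Finset.sum_mul]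
  refine Finset.sum_congr rfl fun a _ => ?_
  rw [monomial_mul, monomial_mul]
  congr 1
  · simp only [T, Finsupp.single_add, Finsupp.single_zero]
    abel
  · ring

/-- The Apéry numbers `a_n = ∑_{k=0}^n C(n,k)² C(n+k,k)²` (sporadic sequence (γ)) form
the constant term sequence of the Laurent polynomial `(y+z)(x+1)(x+y+1)(x+y+z)/(xyz)`:
the coefficient of `x^n y^n z^n` in `((y+z)(x+1)(x+y+1)(x+y+z))^n` equals `a_n`. -/
theorem apery3_constant_term (n : ℕ) (hn : 0 < n) :
    (((X 1 + X 2) * (X 0 + 1) * (X 0 + X 1 + 1) * (X 0 + X 1 + X 2) :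
        MvPolynomial (Fin 3) ℤ) ^ n).coeff
      (Finsupp.equivFunOnFinite.symm fun _ => n) =
    ∑ k ∈ range (n + 1), (n.choose k : ℤ) ^ 2 * ((n + k).choose k : ℤ) ^ 2 := by
  rw [mul_pow, mul_pow, mul_pow, E1, E2, E3, E4]
  simp only [Finset.sum_mul, Finset.mul_sum, T_mul, coeff_sum, coeff_monomial, T_eq]
  rw [keyZ, keyZ2]
end

section
/- For every positive integer n, the coefficient of x^n y^n z^n in the polynomial ((x+1)(y+1)(z+1)(xyz+1))^n ∈ ℤ[x,y,z] equals the n-th Yang–Zudilin number u_n = ∑_{k=0}^{n} C(n,k)^4, i.e. Cooper's sporadic sequence s_10 is the constant term sequence of the Laurent polynomial (x+1)(y+1)(z+1)(xyz+1)/(xyz). -/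
open MvPolynomial Finset

lemma exp1 (n : ℕ) (i : Fin 3) : ((X i + 1 : MvPolynomial (Fin 3) ℤ))^n
    = ∑ a ∈ range (n+1), monomial (Finsupp.single i a) ((n.choose a : ℤ)) := by
  rw [add_pow]
  refine Finset.sum_congr rfl fun a _ => ?_
  rw [X_pow_eq_monomial, one_pow, mul_one, mul_comm,
    show ((n.choose a : ℕ) : MvPolynomial (Fin 3) ℤ) = C (n.choose a : ℤ) by simp,
    C_mul_monomial, mul_one]

lemma exp2 (n : ℕ) : ((X 0 * X 1 * X 2 + 1 : MvPolynomial (Fin 3) ℤ))^n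
    = ∑ k ∈ range (n+1), monomial
        (Finsupp.single 0 k + Finsupp.single 1 k + Finsupp.single 2 k) ((n.choose k : ℤ)) := by
  rw [add_pow]
  refine Finset.sum_congr rfl fun k _ => ?_
  rw [mul_pow, mul_pow, X_pow_eq_monomial, X_pow_eq_monomial, X_pow_eq_monomial,
    monomial_mul, monomial_mul, one_pow, mul_one, mul_one, mul_one, mul_comm,
    show ((n.choose k : ℕ) : MvPolynomial (Fin 3) ℤ) = C (n.choose k : ℤ) by simp,
    C_mul_monomial, mul_one]


/-- The Yang–Zudilin numbers `u_n = ∑_{k=0}^n C(n,k)⁴` (Cooper's sporadic sequence s₁₀)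
form the constant term sequence of the Laurent polynomial `(x+1)(y+1)(z+1)(xyz+1)/(xyz)`:
the coefficient of `x^n y^n z^n` in `((x+1)(y+1)(z+1)(xyz+1))^n` equals `u_n`. -/
theorem s10_constant_term (n : ℕ) (hn : 0 < n) :
    (((X 0 + 1) * (X 1 + 1) * (X 2 + 1) * (X 0 * X 1 * X 2 + 1) :
        MvPolynomial (Fin 3) ℤ) ^ n).coeff
      (Finsupp.equivFunOnFinite.symm fun _ => n) =
    ∑ k ∈ range (n + 1), (n.choose k : ℤ) ^ 4 := by
  set m : Fin 3 →₀ ℕ := Finsupp.equivFunOnFinite.symm fun _ => n with hm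
  have hmi : ∀ i : Fin 3, m i = n := fun i => rfl
  rw [show ((X 0 + 1) * (X 1 + 1) * (X 2 + 1) * (X 0 * X 1 * X 2 + 1) :
      MvPolynomial (Fin 3) ℤ) ^ n
    = (X 0 * X 1 * X 2 + 1)^n * ((X 0 + 1)^n * ((X 1 + 1)^n * (X 2 + 1)^n)) by
      rw [mul_pow, mul_pow, mul_pow]; ring]
  rw [exp2, exp1, exp1, exp1]
  simp only [Finset.mul_sum, Finset.sum_mul, monomial_mul, coeff_sum, coeff_monomial]
  refine Finset.sum_congr rfl fun k hk => ?_
  have hkn : k ≤ n := Nat.lt_succ_iff.mp (Finset.mem_range.mp hk)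
  have hiff : ∀ a b c : ℕ,
      (Finsupp.single (0:Fin 3) c + Finsupp.single 1 c + Finsupp.single 2 c +
        (Finsupp.single 0 b + (Finsupp.single 1 a + Finsupp.single 2 k)) = m)
      ↔ (c = n - k ∧ b = k ∧ a = k) := by
    intro a b c
    constructor
    · intro h
      have h0 := DFunLike.congr_fun h 0
      have h1 := DFunLike.congr_fun h 1
      have h2 := DFunLike.congr_fun h 2
      simp [Finsupp.single_apply, hmi, Fin.ext_iff] at h0 h1 h2
      omega
    · rintro ⟨rfl, rfl, rfl⟩
      ext i
      fin_cases i <;> simp [Finsupp.single_apply, hmi, Fin.ext_iff] <;> omega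
  simp only [hiff, ite_and]
  simp only [Finset.sum_ite_eq', Finset.mem_range, Nat.lt_succ_iff, Nat.sub_le, if_true, hkn]
  rw [Nat.choose_symm hkn]
  ring
end

section
/- For every positive integer n, the coefficient of x^n y^n z^n in the polynomial ((-x+y+z+1)(x-y+z+1)(x+y-z+1)(x+y+z-1))^n ∈ ℤ[x,y,z] equals u_n = ∑_{k=0}^{n} C(2n-2k,n-k)^2 C(2k,k)^2, i.e. the third-order Legendrian sequence u_n = 16^n ∑_{k=0}^{n} C(-1/2,n-k)^2 C(-1/2,k)^2 = ∑_{k=0}^{n} C(2n-2k,n-k)^2 C(2k,k)^2 is the constant term sequence of the Laurent polynomial (-x+y+z+1)(x-y+z+1)(x+y-z+1)(x+y+z-1)/(xyz). -/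
section OneVar
open Polynomial Finset

lemma central (m : ℕ) : (m+1) * (2*m+2).choose (m+1) = 2*(2*m+1) * (2*m).choose m := by
  have h1 : (2*m+2).choose (m+1) = 2 * (2*m+1).choose (m+1) := by
    rw [show 2*m+2 = (2*m+1)+1 by ring, Nat.choose_succ_succ (2*m+1) m,
      ← Nat.choose_symm_half]
    ring
  have h2 : (m+1) * (2*m+1).choose (m+1) = (2*m+1) * (2*m).choose m := by
    have h := (Nat.add_one_mul_choose_eq (2*m) m).symm
    rw [mul_comm]
    exact h
  calc (m+1) * (2*m+2).choose (m+1) = 2 * ((m+1) * (2*m+1).choose (m+1)) := by rw [h1]; ring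
  _ = 2*(2*m+1) * (2*m).choose m := by rw [h2]; ring

lemma coeff_one_sub_X_pow (m t : ℕ) :
    (((1 : ℤ[X]) - X) ^ m).coeff t = (-1)^t * (m.choose t : ℤ) := by
  have h : ((1 : ℤ[X]) - X) ^ m = ∑ i ∈ range (m+1), C ((-1)^i * (m.choose i : ℤ)) * X ^ i := by
    rw [sub_eq_add_neg, add_comm, add_pow]
    refine Finset.sum_congr rfl fun i hi => ?_
    simp only [map_mul, map_pow, map_neg, map_one, map_natCast]
    ring
  rw [h, finset_sum_coeff]
  simp only [coeff_C_mul, coeff_X_pow]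
  rw [Finset.sum_eq_single t]
  · simp
  · intro b _ hbt; simp [if_neg (Ne.symm hbt)]
  · intro ht
    simp only [mem_range, not_lt] at ht
    rw [Nat.choose_eq_zero_of_lt (by omega)]
    simp

-- the derivative identity
lemma deriv_identity (k m : ℕ) :
    (C ((2*m+1 : ℕ) : ℤ)) * (((1:ℤ[X]) - X)^(2*k+2) * (1+X)^(2*m))
      + (C ((2*k+1 : ℕ) : ℤ)) * (((1:ℤ[X]) - X)^(2*k) * (1+X)^(2*m+2))
    = (C ((2*(k+m+1) : ℕ) : ℤ)) * (((1:ℤ[X]) - X)^(2*k+1) * (1+X)^(2*m+1))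
      - C 2 * X * derivative (((1:ℤ[X]) - X)^(2*k+1) * (1+X)^(2*m+1)) := by
  have hd : derivative (((1:ℤ[X]) - X)^(2*k+1) * (1+X)^(2*m+1))
      = - (C ((2*k+1 : ℕ) : ℤ)) * ((1-X)^(2*k) * (1+X)^(2*m+1))
        + (C ((2*m+1 : ℕ) : ℤ)) * ((1-X)^(2*k+1) * (1+X)^(2*m)) := by
    simp only [derivative_mul, derivative_pow, derivative_sub, derivative_add, derivative_one,
      derivative_X, Nat.add_sub_cancel]
    simp only [map_natCast]
    push_cast
    ring
  rw [hd]
  simp only [pow_succ, map_natCast, map_ofNat]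
  push_cast
  ring

lemma Srec (k m : ℕ) :
    ((2*m+1 : ℕ) : ℤ) * ((((1:ℤ[X]) - X)^(2*k+2) * (1+X)^(2*m)).coeff (k+m+1))
      + ((2*k+1 : ℕ) : ℤ) * ((((1:ℤ[X]) - X)^(2*k) * (1+X)^(2*m+2)).coeff (k+m+1)) = 0 := by
  have h := congrArg (fun p => Polynomial.coeff p (k+m+1)) (deriv_identity k m)
  simp only [coeff_add, coeff_sub, coeff_C_mul] at h
  rw [mul_assoc (C 2) X, coeff_C_mul, show k+m+1 = (k+m)+1 from rfl, coeff_X_mul,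
    coeff_derivative] at h
  rw [h]
  push_cast
  ring

lemma Sclosed (n : ℕ) : ∀ k, k ≤ n →
    (n.choose k : ℤ) * ((((1:ℤ[X]) - X)^(2*k) * (1+X)^(2*(n-k))).coeff n)
      = (-1)^k * ((2*k).choose k : ℤ) * ((2*(n-k)).choose (n-k) : ℤ) := by
  intro k
  induction k with
  | zero =>
    intro _
    simp [coeff_one_add_X_pow]
  | succ k ih =>
    intro hk1
    have hk : k ≤ n := by omega
    specialize ih hk
    set m := n - (k+1) with hmdef
    have h1 : n - k = m + 1 := by omega
    have h2 : n = k + m + 1 := by omega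
    have hrec := Srec k m
    rw [← h2] at hrec
    rw [h1, show 2*(m+1) = 2*m+2 by ring] at ih
    rw [show 2*(k+1) = 2*k+2 by ring]
    have hi : (n.choose (k+1) : ℤ) * (k+1) = (n.choose k : ℤ) * (m+1) := by
      have := Nat.choose_succ_right_eq n k
      rw [h1] at this
      exact_mod_cast this
    have hc1 : ((k:ℤ)+1) * ((2*k+2).choose (k+1) : ℤ) = 2*(2*(k:ℤ)+1) * ((2*k).choose k : ℤ) := by
      have h := congrArg (fun t : ℕ => (t:ℤ)) (central k)
      push_cast at h
      linarith
    have hc2 : ((m:ℤ)+1) * ((2*m+2).choose (m+1) : ℤ) = 2*(2*(m:ℤ)+1) * ((2*m).choose m : ℤ) := by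
      have h := congrArg (fun t : ℕ => (t:ℤ)) (central m)
      push_cast at h
      linarith
    have hcan : (2*(m:ℤ)+1) * ((k:ℤ)+1) ≠ 0 := by positivity
    apply mul_left_cancel₀ hcan
    push_cast at hrec hi ih ⊢
    linear_combination (2*(m:ℤ)+1) * ((((1:ℤ[X]) - X)^(2*k+2) * (1+X)^(2*m)).coeff n) * hi
      + ((m:ℤ)+1) * ((n.choose k : ℤ)) * hrec
      + (-((m:ℤ)+1)*(2*(k:ℤ)+1)) * ih
      + (-(2*(k:ℤ)+1)*(-1:ℤ)^k*((2*k).choose k : ℤ)) * hc2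
      + ((2*(m:ℤ)+1)*(-1:ℤ)^k*((2*m).choose m : ℤ)) * hc1

lemma Ssum (n k : ℕ) :
    (((1:ℤ[X]) - X)^(2*k) * (1+X)^(2*(n-k))).coeff n
      = ∑ a ∈ range (n+1), (-1)^a * ((2*k).choose a : ℤ) * ((2*(n-k)).choose (n-a) : ℤ) := by
  rw [coeff_mul, Finset.Nat.sum_antidiagonal_eq_sum_range_succ_mk]
  refine Finset.sum_congr rfl fun a ha => ?_
  rw [coeff_one_sub_X_pow, coeff_one_add_X_pow]

lemma key_binomial (n : ℕ) : ∀ k, k ≤ n →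
    (n.choose k : ℤ) * (∑ a ∈ range (n+1),
        (-1)^a * ((2*k).choose a : ℤ) * ((2*(n-k)).choose (n-a) : ℤ))
      = (-1)^k * ((2*k).choose k : ℤ) * ((2*(n-k)).choose (n-k) : ℤ) := by
  intro k hk
  rw [← Ssum]
  exact Sclosed n k hk

end OneVar

section Collapse
open Finset

lemma collapse1 (M b t : ℕ) (f : ℕ → ℤ) (hf : ∀ x, M < x → f x = 0) :
    (∑ x ∈ range (M+1), if x + b = t then f x else 0) = if b ≤ t then f (t - b) else 0 := by
  by_cases hbt : b ≤ t
  · rw [if_pos hbt]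
    by_cases hM : t - b ≤ M
    · rw [Finset.sum_eq_single (t-b)]
      · rw [if_pos (by omega)]
      · intro x hx hne
        rw [if_neg (by omega)]
      · intro h
        exact absurd (mem_range.2 (by omega)) h
    · rw [hf _ (by omega)]
      apply Finset.sum_eq_zero
      intro x hx
      rw [mem_range] at hx
      rw [if_neg (by omega)]
  · rw [if_neg hbt]
    apply Finset.sum_eq_zero
    intro x hx
    rw [if_neg (by omega)]

lemma rangeAdjust (M n : ℕ) (g : ℕ → ℤ) (hg : ∀ b, M < b → g b = 0) :
    (∑ b ∈ range (M+1), if b ≤ n then g b else 0) = ∑ b ∈ range (n+1), g b := by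
  have h1 : (∑ b ∈ range (M+1), if b ≤ n then g b else 0)
      = ∑ b ∈ range (max M n + 1), if b ≤ n then g b else 0 := by
    apply Finset.sum_subset (Finset.range_subset_range.2 (by omega))
    intro x hx hnx
    rw [mem_range] at hx hnx
    rw [hg x (by omega)]
    simp
  have h2 : (∑ b ∈ range (n+1), g b)
      = ∑ b ∈ range (max M n + 1), if b ≤ n then g b else 0 := by
    rw [← Finset.sum_subset (Finset.range_subset_range.2 (show n+1 ≤ max M n + 1 by omega))
      (fun x hx hnx => by rw [mem_range] at hnx; rw [if_neg (by omega)])]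
    apply Finset.sum_congr rfl
    intro x hx
    rw [mem_range] at hx
    rw [if_pos (by omega)]
  rw [h1, ← h2]

lemma negpow_cancel {u v c : ℤ} (h1 : u * v = c) (h2 : v * v = 1) : u = c * v := by
  calc u = u * (v * v) := by rw [h2, mul_one]
  _ = (u * v) * v := by ring
  _ = c * v := by rw [h1]

lemma neg_one_sq_pow (e : ℕ) : ((-1 : ℤ))^e * (-1)^e = 1 := by
  rw [← pow_add]
  exact Even.neg_one_pow ⟨e, rfl⟩

lemma XYeq (n j : ℕ) (hj : j ≤ n) :
    (∑ b ∈ range (2*(n-j)+1), ∑ a ∈ range (2*j+1),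
      if a + b = n then ((-1:ℤ)^(2*(n-j)-b) * ((2*j).choose a : ℤ)
        * ((2*(n-j)).choose b : ℤ)) else 0)
    = (-1)^n * ∑ a ∈ range (n+1),
        (-1)^a * ((2*j).choose a : ℤ) * ((2*(n-j)).choose (n-a) : ℤ) := by
  have step1 : ∀ b ∈ range (2*(n-j)+1), (∑ a ∈ range (2*j+1),
      if a + b = n then ((-1:ℤ)^(2*(n-j)-b) * ((2*j).choose a : ℤ)
        * ((2*(n-j)).choose b : ℤ)) else 0)
      = if b ≤ n then ((-1:ℤ)^(2*(n-j)-b) * ((2*j).choose (n-b) : ℤ)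
        * ((2*(n-j)).choose b : ℤ)) else 0 := by
    intro b _
    exact collapse1 (2*j) b n _ (fun x hx => by rw [Nat.choose_eq_zero_of_lt hx]; simp)
  rw [Finset.sum_congr rfl step1,
    rangeAdjust (2*(n-j)) n _ (fun b hb => by rw [Nat.choose_eq_zero_of_lt hb]; simp),
    ← Finset.sum_range_reflect, Finset.mul_sum]
  refine Finset.sum_congr rfl fun a ha => ?_
  rw [mem_range] at ha
  rw [show n + 1 - 1 - a = n - a from rfl, show n - (n - a) = a by omega]
  by_cases hc : n - a ≤ 2*(n-j)
  · have h1 : ((-1:ℤ))^(2*(n-j)-(n-a)) * (-1)^(n-a) = 1 := by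
      rw [← pow_add, show 2*(n-j)-(n-a) + (n-a) = 2*(n-j) by omega]
      exact Even.neg_one_pow ⟨n-j, by ring⟩
    have h2 : ((-1:ℤ))^(n-a) * (-1)^a = (-1)^n := by
      rw [← pow_add, show n-a+a = n by omega]
    have hE1 := negpow_cancel h1 (neg_one_sq_pow (n-a))
    have hE2 := negpow_cancel h2 (neg_one_sq_pow a)
    rw [hE1, one_mul, hE2]
    ring
  · rw [Nat.choose_eq_zero_of_lt (show 2*(n-j) < n - a by omega)]
    push_cast
    ring

lemma ZWeq (n j : ℕ) (hj : j ≤ n) :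
    (∑ d ∈ range (2*j+1), ∑ c ∈ range (2*(n-j)+1),
      if c + d = n then ((-1:ℤ)^(2*(n-j)-c) * ((2*(n-j)).choose c : ℤ)
        * ((2*j).choose d : ℤ)) else 0)
    = (-1)^n * ∑ a ∈ range (n+1),
        (-1)^a * ((2*j).choose a : ℤ) * ((2*(n-j)).choose (n-a) : ℤ) := by
  have step1 : ∀ d ∈ range (2*j+1), (∑ c ∈ range (2*(n-j)+1),
      if c + d = n then ((-1:ℤ)^(2*(n-j)-c) * ((2*(n-j)).choose c : ℤ)
        * ((2*j).choose d : ℤ)) else 0)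
      = if d ≤ n then ((-1:ℤ)^(2*(n-j)-(n-d)) * ((2*(n-j)).choose (n-d) : ℤ)
        * ((2*j).choose d : ℤ)) else 0 := by
    intro d _
    exact collapse1 (2*(n-j)) d n _
      (fun x hx => by rw [Nat.choose_eq_zero_of_lt hx]; simp)
  rw [Finset.sum_congr rfl step1,
    rangeAdjust (2*j) n _ (fun d hd => by rw [Nat.choose_eq_zero_of_lt hd]; simp),
    Finset.mul_sum]
  refine Finset.sum_congr rfl fun d hd => ?_
  rw [mem_range] at hd
  by_cases hc : n - d ≤ 2*(n-j)
  · have h1 : ((-1:ℤ))^(2*(n-j)-(n-d)) * (-1)^(n-d) = 1 := by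
      rw [← pow_add, show 2*(n-j)-(n-d) + (n-d) = 2*(n-j) by omega]
      exact Even.neg_one_pow ⟨n-j, by ring⟩
    have h2 : ((-1:ℤ))^(n-d) * (-1)^d = (-1)^n := by
      rw [← pow_add, show n-d+d = n by omega]
    have hE1 := negpow_cancel h1 (neg_one_sq_pow (n-d))
    have hE2 := negpow_cancel h2 (neg_one_sq_pow d)
    rw [hE1, one_mul, hE2]
    ring
  · rw [Nat.choose_eq_zero_of_lt (show 2*(n-j) < n - d by omega)]
    push_cast
    ring

lemma TERM (n j k : ℕ) (hj : j ≤ n) (hk : k ≤ n) :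
    ((-1)^(n-j) * (-1)^(n-k) * (n.choose j) * (n.choose k) : ℤ) *
      (∑ d ∈ range (2*k+1), ∑ c ∈ range (2*(n-j)+1), ∑ b ∈ range (2*(n-k)+1),
        ∑ a ∈ range (2*j+1),
          if a + b = n ∧ (2*j - a) + (2*(n-k) - b) = n ∧ c + d = n
          then ((-1:ℤ)^(2*(n-k)-b) * (-1)^(2*(n-j)-c) * ((2*j).choose a)
            * ((2*(n-k)).choose b) * ((2*(n-j)).choose c) * ((2*k).choose d))
          else 0)
    = if k = j then ((2*(n-j)).choose (n-j) : ℤ)^2 * ((2*j).choose j : ℤ)^2 else 0 := by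
  by_cases hjk : k = j
  · subst hjk
    rw [if_pos rfl]
    have hsplit : (∑ d ∈ range (2*k+1), ∑ c ∈ range (2*(n-k)+1), ∑ b ∈ range (2*(n-k)+1),
        ∑ a ∈ range (2*k+1),
          if a + b = n ∧ (2*k - a) + (2*(n-k) - b) = n ∧ c + d = n
          then ((-1:ℤ)^(2*(n-k)-b) * (-1)^(2*(n-k)-c) * ((2*k).choose a)
            * ((2*(n-k)).choose b) * ((2*(n-k)).choose c) * ((2*k).choose d))
          else 0)
        = (∑ d ∈ range (2*k+1), ∑ c ∈ range (2*(n-k)+1),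
            if c + d = n then ((-1:ℤ)^(2*(n-k)-c) * ((2*(n-k)).choose c : ℤ)
              * ((2*k).choose d : ℤ)) else 0)
          * (∑ b ∈ range (2*(n-k)+1), ∑ a ∈ range (2*k+1),
            if a + b = n then ((-1:ℤ)^(2*(n-k)-b) * ((2*k).choose a : ℤ)
              * ((2*(n-k)).choose b : ℤ)) else 0) := by
      have step : ∀ d ∈ range (2*k+1), ∀ c ∈ range (2*(n-k)+1), ∀ b ∈ range (2*(n-k)+1),
          ∀ a ∈ range (2*k+1),
          (if a + b = n ∧ (2*k - a) + (2*(n-k) - b) = n ∧ c + d = n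
          then ((-1:ℤ)^(2*(n-k)-b) * (-1)^(2*(n-k)-c) * ((2*k).choose a)
            * ((2*(n-k)).choose b) * ((2*(n-k)).choose c) * ((2*k).choose d))
          else 0)
          = (if c + d = n then ((-1:ℤ)^(2*(n-k)-c) * ((2*(n-k)).choose c : ℤ)
              * ((2*k).choose d : ℤ)) else 0)
            * (if a + b = n then ((-1:ℤ)^(2*(n-k)-b) * ((2*k).choose a : ℤ)
              * ((2*(n-k)).choose b : ℤ)) else 0) := by
        intro d hd c hc b hb a ha
        rw [mem_range] at hd hc hb ha
        by_cases hA : a + b = n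
        · by_cases hC : c + d = n
          · rw [if_pos ⟨hA, by omega, hC⟩, if_pos hC, if_pos hA]
            ring
          · rw [if_neg (by tauto), if_neg hC, zero_mul]
        · rw [if_neg (by tauto), if_neg hA, mul_zero]
      rw [Finset.sum_congr rfl fun d hd => Finset.sum_congr rfl fun c hc =>
        Finset.sum_congr rfl fun b hb => Finset.sum_congr rfl fun a ha =>
          step d hd c hc b hb a ha]
      simp only [← Finset.mul_sum]
      simp only [← Finset.sum_mul]
    rw [hsplit, XYeq n k hk, ZWeq n k hk]
    have h1 := neg_one_sq_pow (n-k)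
    have h2 := neg_one_sq_pow n
    have h3 := neg_one_sq_pow k
    have kb := key_binomial n k hk
    set B := (∑ a ∈ range (n+1),
        (-1:ℤ)^a * ((2*k).choose a : ℤ) * ((2*(n-k)).choose (n-a) : ℤ)) with hB
    linear_combination ((-1:ℤ)^n*(-1)^n*((n.choose k : ℤ))*((n.choose k : ℤ))*B*B) * h1
      + (((n.choose k : ℤ))*((n.choose k : ℤ))*B*B) * h2
      + (((n.choose k : ℤ))*B + (-1:ℤ)^k*((2*k).choose k : ℤ)*((2*(n-k)).choose (n-k) : ℤ)) * kb
      + (((2*k).choose k : ℤ)*((2*k).choose k : ℤ)*((2*(n-k)).choose (n-k) : ℤ)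
          *((2*(n-k)).choose (n-k) : ℤ)) * h3
  · rw [if_neg hjk]
    apply mul_eq_zero_of_right
    apply Finset.sum_eq_zero; intro d hd
    apply Finset.sum_eq_zero; intro c hc
    apply Finset.sum_eq_zero; intro b hb
    apply Finset.sum_eq_zero; intro a ha
    rw [mem_range] at hd hc hb ha
    rw [if_neg]
    rintro ⟨h1, h2, h3⟩
    exact hjk (by omega)

end Collapse

set_option maxRecDepth 8000

open MvPolynomial Finset

lemma Hcoeff (n : ℕ) (r : ℤ) (α β γ : ℕ) :
    MvPolynomial.coeff (Finsupp.equivFunOnFinite.symm fun _ => n)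
      ((C r * X 0 ^ α * X 1 ^ β * X 2 ^ γ : MvPolynomial (Fin 3) ℤ))
    = if α = n ∧ β = n ∧ γ = n then r else 0 := by
  rw [X_pow_eq_monomial, X_pow_eq_monomial, X_pow_eq_monomial, C_mul_monomial,
    monomial_mul, monomial_mul, coeff_monomial]
  have hcond : (Finsupp.single (0 : Fin 3) α + Finsupp.single 1 β + Finsupp.single 2 γ
      = Finsupp.equivFunOnFinite.symm fun _ => n) ↔ (α = n ∧ β = n ∧ γ = n) := by
    constructor
    · intro h
      have h0 := DFunLike.congr_fun h 0
      have h1 := DFunLike.congr_fun h 1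
      have h2 := DFunLike.congr_fun h 2
      simp [Finsupp.single_apply] at h0 h1 h2
      exact ⟨h0, h1, h2⟩
    · rintro ⟨rfl, rfl, rfl⟩
      ext i
      fin_cases i <;> simp [Finsupp.single_apply]
  rw [if_congr hcond rfl rfl]
  simp

lemma KEY (n p q r s : ℕ) :
    MvPolynomial.coeff (Finsupp.equivFunOnFinite.symm fun _ => n)
      (((X 0 + X 1)^p * (X 0 - X 1)^q * (X 2 - 1)^r * (X 2 + 1)^s : MvPolynomial (Fin 3) ℤ))
    = ∑ d ∈ range (s+1), ∑ c ∈ range (r+1), ∑ b ∈ range (q+1), ∑ a ∈ range (p+1),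
        if a + b = n ∧ (p-a)+(q-b) = n ∧ c+d = n
        then ((-1)^(q-b) * (-1)^(r-c) * (p.choose a) * (q.choose b) * (r.choose c)
          * (s.choose d) : ℤ)
        else 0 := by
  rw [show ((X 0 - X 1 : MvPolynomial (Fin 3) ℤ))^q = (X 0 + (- X 1))^q by rw [sub_eq_add_neg],
      show ((X 2 - 1 : MvPolynomial (Fin 3) ℤ))^r = (X 2 + (-1))^r by rw [sub_eq_add_neg],
      add_pow, add_pow, add_pow, add_pow]
  simp only [Finset.sum_mul, Finset.mul_sum, MvPolynomial.coeff_sum]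
  refine Finset.sum_congr rfl fun d hd => ?_
  refine Finset.sum_congr rfl fun c hc => ?_
  refine Finset.sum_congr rfl fun b hb => ?_
  refine Finset.sum_congr rfl fun a ha => ?_
  have e1 : (X 0 ^ a * X 1 ^ (p - a) * ((p.choose a : ℕ) : MvPolynomial (Fin 3) ℤ)
        * (X 0 ^ b * (-X 1) ^ (q - b) * ((q.choose b : ℕ) : MvPolynomial (Fin 3) ℤ))
        * (X 2 ^ c * (-1) ^ (r - c) * ((r.choose c : ℕ) : MvPolynomial (Fin 3) ℤ))
        * (X 2 ^ d * 1 ^ (s - d) * ((s.choose d : ℕ) : MvPolynomial (Fin 3) ℤ)))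
      = C (((-1)^(q-b) * (-1)^(r-c) * (p.choose a) * (q.choose b) * (r.choose c)
          * (s.choose d) : ℤ)) * X 0^(a+b) * X 1^((p-a)+(q-b)) * X 2^(c+d) := by
    simp only [map_mul, map_pow, map_neg, map_one, map_natCast]
    ring
  rw [show p - a + (q - b) = (p-a)+(q-b) from rfl] at e1
  rw [e1, Hcoeff]

lemma expandP (n : ℕ) :
    ((-X 0 + X 1 + X 2 + 1) * (X 0 - X 1 + X 2 + 1) * (X 0 + X 1 - X 2 + 1) *
        (X 0 + X 1 + X 2 - 1) : MvPolynomial (Fin 3) ℤ) ^ n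
    = ∑ j ∈ range (n+1), ∑ k ∈ range (n+1),
        C (((-1)^(n-j) * (-1)^(n-k) * (n.choose j) * (n.choose k) : ℤ))
          * ((X 0 + X 1)^(2*j) * (X 0 - X 1)^(2*(n-k)) * (X 2 - 1)^(2*(n-j))
            * (X 2 + 1)^(2*k)) := by
  have hfac : ((-X 0 + X 1 + X 2 + 1) * (X 0 - X 1 + X 2 + 1) * (X 0 + X 1 - X 2 + 1) *
        (X 0 + X 1 + X 2 - 1) : MvPolynomial (Fin 3) ℤ)
      = ((X 0 + X 1)^2 + (-((X 2 - 1)^2))) * ((X 2 + 1)^2 + (-((X 0 - X 1)^2))) := by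
    ring
  rw [hfac, mul_pow,
    add_pow ((X 0 + X 1 : MvPolynomial (Fin 3) ℤ)^2) (-((X 2 - 1)^2)) n,
    add_pow ((X 2 + 1 : MvPolynomial (Fin 3) ℤ)^2) (-((X 0 - X 1)^2)) n,
    Finset.sum_mul_sum]
  refine Finset.sum_congr rfl fun j hj => Finset.sum_congr rfl fun k hk => ?_
  rw [show (-((X 2 - 1 : MvPolynomial (Fin 3) ℤ)^2)) = (-1) * (X 2 - 1)^2 by ring,
    show (-((X 0 - X 1 : MvPolynomial (Fin 3) ℤ)^2)) = (-1) * (X 0 - X 1)^2 by ring,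
    mul_pow, mul_pow, ← pow_mul, ← pow_mul, ← pow_mul, ← pow_mul]
  simp only [map_mul, map_pow, map_neg, map_one, map_natCast]
  ring


/-- The third-order Legendrian sequence `u_n = ∑_{k=0}^n C(2n-2k,n-k)² C(2k,k)²` is the
constant term sequence of the Laurent polynomial
`(-x+y+z+1)(x-y+z+1)(x+y-z+1)(x+y+z-1)/(xyz)`: the coefficient of `x^n y^n z^n` in
`((-x+y+z+1)(x-y+z+1)(x+y-z+1)(x+y+z-1))^n` equals `u_n`. -/
theorem legendrian_constant_term (n : ℕ) (hn : 0 < n) :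
    (((-X 0 + X 1 + X 2 + 1) * (X 0 - X 1 + X 2 + 1) * (X 0 + X 1 - X 2 + 1) *
        (X 0 + X 1 + X 2 - 1) : MvPolynomial (Fin 3) ℤ) ^ n).coeff
      (Finsupp.equivFunOnFinite.symm fun _ => n) =
    ∑ k ∈ range (n + 1),
      ((2 * n - 2 * k).choose (n - k) : ℤ) ^ 2 * ((2 * k).choose k : ℤ) ^ 2 := by
  rw [expandP n]
  simp only [MvPolynomial.coeff_sum, MvPolynomial.coeff_C_mul, KEY n]
  have hstep : ∀ j ∈ range (n+1), (∑ k ∈ range (n+1),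
      ((-1)^(n-j) * (-1)^(n-k) * (n.choose j) * (n.choose k) : ℤ) *
      (∑ d ∈ range (2*k+1), ∑ c ∈ range (2*(n-j)+1), ∑ b ∈ range (2*(n-k)+1),
        ∑ a ∈ range (2*j+1),
          if a + b = n ∧ (2*j - a) + (2*(n-k) - b) = n ∧ c + d = n
          then ((-1:ℤ)^(2*(n-k)-b) * (-1)^(2*(n-j)-c) * ((2*j).choose a)
            * ((2*(n-k)).choose b) * ((2*(n-j)).choose c) * ((2*k).choose d))
          else 0))
      = ((2*(n-j)).choose (n-j) : ℤ)^2 * ((2*j).choose j : ℤ)^2 := by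
    intro j hj
    rw [mem_range] at hj
    rw [Finset.sum_congr rfl (fun k hk =>
      TERM n j k (by omega) (by rw [mem_range] at hk; omega))]
    rw [Finset.sum_ite_eq' (range (n+1)) j
      (fun _ => ((2*(n-j)).choose (n-j) : ℤ)^2 * ((2*j).choose j : ℤ)^2)]
    rw [if_pos (mem_range.2 (by omega))]
  rw [Finset.sum_congr rfl hstep]
  refine Finset.sum_congr rfl fun k hk => ?_
  rw [mem_range] at hk
  rw [show 2*(n-k) = 2*n-2*k by omega]
end
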